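/- arXiv:1402.4448 — 6 statements merged into one kernel-verified Lean document; each statement's English description precedes it below -/
import Mathlib

section
/- Fix u, v, w ∈ ℕ and weights α, β ∈ ℚ. Let G ∈ ℚ[[t]] be the formal power series whose coefficient of t^n is the sum of the weights α^a·β^b over all n-step walks in the triangle model starting at (u,v,w), where a and b are the numbers of steps of the walk in Ω′ and Ω″ respectively. Then (1−p)^3·(1−p^(u+v+w+3))·G = (1−p^3)·(1−p^(u+1))·(1−p^(v+1))·(1−p^(w+1)) in ℚ[[t]]. -/
open scoped Classical

/-- The directed sublattice step-set Ω′. -/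
def OmegaA : Finset (ℤ × ℤ × ℤ) := {(1,0,-1), (-1,1,0), (0,-1,1)}

/-- The directed sublattice step-set Ω″. -/
def OmegaB : Finset (ℤ × ℤ × ℤ) := {(1,-1,0), (-1,0,1), (0,1,-1)}

/-- The full step-set Ω₂ = Ω′ ∪ Ω″ of the triangle model. -/
def OmegaFull : Finset (ℤ × ℤ × ℤ) := OmegaA ∪ OmegaB

/-- Position after `i` steps of the walk with step sequence `s` starting at `start`. -/
def triPos (start : ℤ × ℤ × ℤ) {n : ℕ} (s : Fin n → ℤ × ℤ × ℤ) (i : ℕ) : ℤ × ℤ × ℤ :=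
  start + ∑ j ∈ Finset.univ.filter (fun j : Fin n => (j : ℕ) < i), s j

/-- All three coordinates nonnegative. -/
def nonneg3 (v : ℤ × ℤ × ℤ) : Prop := 0 ≤ v.1 ∧ 0 ≤ v.2.1 ∧ 0 ≤ v.2.2

/-- `n`-step walks of the triangle model starting at `start`, encoded by their step
sequences: every step lies in Ω₂ and every intermediate point lies in ℕ³. -/
noncomputable def triWalks (start : ℤ × ℤ × ℤ) (n : ℕ) : Finset (Fin n → ℤ × ℤ × ℤ) :=
  (Fintype.piFinset fun _ : Fin n => OmegaFull).filter
    (fun s => ∀ i ≤ n, nonneg3 (triPos start s i))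

/-- Number of steps of the walk lying in Ω′. -/
noncomputable def countA {n : ℕ} (s : Fin n → ℤ × ℤ × ℤ) : ℕ :=
  (Finset.univ.filter fun j => s j ∈ OmegaA).card

/-- Number of steps of the walk lying in Ω″. -/
noncomputable def countB {n : ℕ} (s : Fin n → ℤ × ℤ × ℤ) : ℕ :=
  (Finset.univ.filter fun j => s j ∈ OmegaB).card

-- auxiliary development
namespace TriAux

noncomputable def wt (α β : ℚ) (z : ℤ × ℤ × ℤ) : ℚ :=
  (if z ∈ OmegaA then α else 1) * (if z ∈ OmegaB then β else 1)

lemma weight_eq {n : ℕ} (α β : ℚ) (s : Fin n → ℤ × ℤ × ℤ) :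
    α ^ countA s * β ^ countB s = ∏ j, wt α β (s j) := by
  unfold countA countB wt
  rw [← Finset.prod_const, ← Finset.prod_const, Finset.prod_filter, Finset.prod_filter,
    ← Finset.prod_mul_distrib]

lemma triPos_zero (x : ℤ × ℤ × ℤ) {n : ℕ} (s : Fin n → ℤ × ℤ × ℤ) : triPos x s 0 = x := by
  simp [triPos]

lemma triPos_succ (x : ℤ × ℤ × ℤ) {n : ℕ} (s : Fin (n + 1) → ℤ × ℤ × ℤ) (i : ℕ) :
    triPos x s (i + 1) = triPos (x + s 0) (Fin.tail s) i := by
  unfold triPos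
  rw [Finset.sum_filter, Finset.sum_filter, Fin.sum_univ_succ]
  simp [Fin.tail, Nat.succ_lt_succ_iff, add_assoc]


lemma mem_triWalks_succ {x : ℤ × ℤ × ℤ} (hx : nonneg3 x) {n : ℕ} (s : Fin (n + 1) → ℤ × ℤ × ℤ) :
    s ∈ triWalks x (n + 1) ↔
      s 0 ∈ OmegaFull ∧ nonneg3 (x + s 0) ∧ Fin.tail s ∈ triWalks (x + s 0) n := by
  simp only [triWalks, Finset.mem_filter, Fintype.mem_piFinset]
  constructor
  · rintro ⟨h1, h2⟩
    refine ⟨h1 0, ?_, fun j => h1 j.succ, fun i hi => ?_⟩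
    · have := h2 (0 + 1) (by omega)
      rwa [triPos_succ, triPos_zero] at this
    · have := h2 (i + 1) (by omega)
      rwa [triPos_succ] at this
  · rintro ⟨h0, hxz, h1, h2⟩
    refine ⟨fun j => ?_, fun i hi => ?_⟩
    · rcases Fin.eq_zero_or_eq_succ j with rfl | ⟨k, rfl⟩
      · exact h0
      · exact h1 k
    · rcases i with _ | i
      · rwa [triPos_zero]
      · rw [triPos_succ]; exact h2 i (by omega)

lemma sum_triWalks_succ {x : ℤ × ℤ × ℤ} (hx : nonneg3 x) (α β : ℚ) (n : ℕ) :
    (∑ s ∈ triWalks x (n + 1), ∏ j, wt α β (s j)) =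
      ∑ z ∈ OmegaFull.filter (fun z => nonneg3 (x + z)),
        wt α β z * ∑ s ∈ triWalks (x + z) n, ∏ j, wt α β (s j) := by
  have key : (∑ s ∈ triWalks x (n + 1), ∏ j, wt α β (s j)) =
      ∑ zs ∈ (OmegaFull.filter (fun z => nonneg3 (x + z))).sigma
          (fun z => triWalks (x + z) n),
        wt α β zs.1 * ∏ j, wt α β (zs.2 j) := by
    refine Finset.sum_bij' (fun s (_ : s ∈ triWalks x (n+1)) => (⟨s 0, Fin.tail s⟩ : (z : ℤ × ℤ × ℤ) × (Fin n → ℤ × ℤ × ℤ)))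
      (fun zs _ => Fin.cons zs.1 zs.2) ?_ ?_ ?_ ?_ ?_
    · intro s hs
      rw [mem_triWalks_succ hx] at hs
      simp only [Finset.mem_sigma, Finset.mem_filter]
      exact ⟨⟨hs.1, hs.2.1⟩, hs.2.2⟩
    · intro zs hzs
      simp only [Finset.mem_sigma, Finset.mem_filter] at hzs
      rw [mem_triWalks_succ hx]
      simpa [Fin.tail_cons] using ⟨hzs.1.1, hzs.1.2, hzs.2⟩
    · intro s _; exact Fin.cons_self_tail s
    · intro zs _; simp
    · intro s _; rw [Fin.prod_univ_succ]; rfl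
  rw [key, Finset.sum_sigma]
  simp_rw [Finset.mul_sum]

section GF
open PowerSeries

variable (α β : ℚ)

noncomputable def Gser (x : ℤ × ℤ × ℤ) : PowerSeries ℚ :=
  PowerSeries.mk fun n => ∑ s ∈ triWalks x n, (α ^ countA s * β ^ countB s : ℚ)

lemma Gser_eq_mk_prod (x : ℤ × ℤ × ℤ) :
    Gser α β x = PowerSeries.mk fun n => ∑ s ∈ triWalks x n, ∏ j, wt α β (s j) := by
  unfold Gser
  refine congrArg _ (funext fun n => ?_)
  exact Finset.sum_congr rfl fun s _ => weight_eq α β s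

lemma triWalks_zero {x : ℤ × ℤ × ℤ} (hx : nonneg3 x) :
    triWalks x 0 = Finset.univ := by
  unfold triWalks
  rw [Finset.filter_true_of_mem]
  · exact Finset.eq_univ_of_forall fun s => Fintype.mem_piFinset.2 fun j => j.elim0
  · intro s _ i hi
    interval_cases i
    rwa [triPos_zero]

lemma Gser_rec {x : ℤ × ℤ × ℤ} (hx : nonneg3 x) :
    Gser α β x = 1 + PowerSeries.X *
      ∑ z ∈ OmegaFull.filter (fun z => nonneg3 (x + z)),
        PowerSeries.C (wt α β z) * Gser α β (x + z) := by
  rw [Gser_eq_mk_prod]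
  ext n
  rcases n with _ | n
  · simp [triWalks_zero hx, Finset.card_univ]
  · rw [PowerSeries.coeff_mk, map_add, PowerSeries.coeff_succ_X_mul]
    have : (PowerSeries.coeff (R := ℚ) (n+1)) 1 = 0 := by simp
    rw [this, zero_add, map_sum]
    rw [sum_triWalks_succ hx]
    refine Finset.sum_congr rfl fun z hz => ?_
    rw [PowerSeries.coeff_C_mul, Gser_eq_mk_prod, PowerSeries.coeff_mk]

end GF
section Alg
open PowerSeries

noncomputable def Kz (p : PowerSeries ℚ) (y : ℤ × ℤ × ℤ) : PowerSeries ℚ :=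
  (1 - p ^ 3) * (1 - p ^ (y.1 + 1).toNat) * (1 - p ^ (y.2.1 + 1).toNat)
    * (1 - p ^ (y.2.2 + 1).toNat)

lemma Kz_eq_zero (p : PowerSeries ℚ) {y : ℤ × ℤ × ℤ} (hy : ¬ nonneg3 y) : Kz p y = 0 := by
  unfold nonneg3 at hy
  push_neg at hy
  unfold Kz
  by_cases h1 : 0 ≤ y.1
  · by_cases h2 : 0 ≤ y.2.1
    · have h3 := hy h1 h2
      have : (y.2.2 + 1).toNat = 0 := by omega
      rw [this]; ring
    · have : (y.2.1 + 1).toNat = 0 := by omega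
      rw [this]; ring
  · have : (y.1 + 1).toNat = 0 := by omega
    rw [this]; ring

lemma omega_expand : OmegaFull =
    ({(1,0,-1), (-1,1,0), (0,-1,1), (1,-1,0), (-1,0,1), (0,1,-1)} :
      Finset (ℤ × ℤ × ℤ)) := by decide

lemma Kz_rec (α β : ℚ) (p : PowerSeries ℚ) (hp0 : PowerSeries.constantCoeff p = 0)
    (hp : p = PowerSeries.C (α + β) * PowerSeries.X * (1 + p + p ^ 2))
    (a b c : ℕ) :
    Kz p ((a : ℤ), (b : ℤ), (c : ℤ)) =
      (1 - p) ^ 3 * (1 - p ^ (a + b + c + 3)) +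
        PowerSeries.X * ∑ z ∈ OmegaFull,
          PowerSeries.C (wt α β z) * Kz p (((a : ℤ), (b : ℤ), (c : ℤ)) + z) := by
  rw [omega_expand]
  rw [Finset.sum_insert (by decide), Finset.sum_insert (by decide),
    Finset.sum_insert (by decide), Finset.sum_insert (by decide),
    Finset.sum_insert (by decide), Finset.sum_singleton]
  have wA1 : wt α β (1,0,-1) = α := by simp [wt, OmegaA, OmegaB]
  have wA2 : wt α β (-1,1,0) = α := by simp [wt, OmegaA, OmegaB]
  have wA3 : wt α β (0,-1,1) = α := by simp [wt, OmegaA, OmegaB]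
  have wB1 : wt α β (1,-1,0) = β := by simp [wt, OmegaA, OmegaB]
  have wB2 : wt α β (-1,0,1) = β := by simp [wt, OmegaA, OmegaB]
  have wB3 : wt α β (0,1,-1) = β := by simp [wt, OmegaA, OmegaB]
  rw [wA1, wA2, wA3, wB1, wB2, wB3]
  unfold Kz
  simp only [Prod.mk_add_mk, Prod.fst, Prod.snd]
  have t0 : ∀ m : ℕ, ((m : ℤ) + 1).toNat = m + 1 := fun m => by omega
  have t1 : ∀ m : ℕ, ((m : ℤ) + 1 + 1).toNat = m + 2 := fun m => by omega
  have t2 : ∀ m : ℕ, ((m : ℤ) + -1 + 1).toNat = m := fun m => by omega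
  have t3 : ∀ m : ℕ, ((m : ℤ) + 0 + 1).toNat = m + 1 := fun m => by omega
  simp only [t0, t1, t2, t3]
  -- now pure algebra
  have hq : (1 + p + p ^ 2) ≠ 0 := by
    intro h
    have := congrArg (PowerSeries.constantCoeff) h
    simp [hp0] at this
  apply mul_left_cancel₀ hq
  rw [map_add] at hp
  linear_combination ((1 - p^3) * ((1 - p^a * p^2) * (1 - p^b * p) * (1 - p^c)
      + (1 - p^a) * (1 - p^b * p^2) * (1 - p^c * p)
      + (1 - p^a * p) * (1 - p^b) * (1 - p^c * p^2))) * hp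

end Alg
section Main
open PowerSeries

noncomputable def Ez (α β : ℚ) (p : PowerSeries ℚ) (N : ℕ) (y : ℤ × ℤ × ℤ) :
    PowerSeries ℚ :=
  (1 - p) ^ 3 * (1 - p ^ (N + 3)) * Gser α β y - Kz p y

lemma Ez_rec (α β : ℚ) (p : PowerSeries ℚ) (hp0 : PowerSeries.constantCoeff p = 0)
    (hp : p = PowerSeries.C (α + β) * PowerSeries.X * (1 + p + p ^ 2))
    (a b c : ℕ) :
    Ez α β p (a + b + c) ((a : ℤ), (b : ℤ), (c : ℤ)) =
      PowerSeries.X * ∑ z ∈ OmegaFull.filter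
          (fun z => nonneg3 (((a : ℤ), (b : ℤ), (c : ℤ)) + z)),
        PowerSeries.C (wt α β z) * Ez α β p (a + b + c) (((a : ℤ), (b : ℤ), (c : ℤ)) + z) := by
  have hx : nonneg3 ((a : ℤ), (b : ℤ), (c : ℤ)) := by
    refine ⟨by positivity, by positivity, by positivity⟩
  have hK : Kz p ((a : ℤ), (b : ℤ), (c : ℤ)) =
      (1 - p) ^ 3 * (1 - p ^ (a + b + c + 3)) +
        PowerSeries.X * ∑ z ∈ OmegaFull.filter
            (fun z => nonneg3 (((a : ℤ), (b : ℤ), (c : ℤ)) + z)),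
          PowerSeries.C (wt α β z) * Kz p (((a : ℤ), (b : ℤ), (c : ℤ)) + z) := by
    rw [Kz_rec α β p hp0 hp a b c]
    congr 2
    exact (Finset.sum_filter_of_ne fun z _ hne => by
      by_contra hnz
      exact hne (by rw [Kz_eq_zero p hnz, mul_zero])).symm
  unfold Ez
  rw [Gser_rec α β hx, hK]
  have h1 : ∑ z ∈ OmegaFull.filter
        (fun z => nonneg3 (((a : ℤ), (b : ℤ), (c : ℤ)) + z)),
      PowerSeries.C (wt α β z) *
        ((1 - p) ^ 3 * (1 - p ^ (a + b + c + 3)) * Gser α β (((a : ℤ), (b : ℤ), (c : ℤ)) + z)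
          - Kz p (((a : ℤ), (b : ℤ), (c : ℤ)) + z)) =
      (1 - p) ^ 3 * (1 - p ^ (a + b + c + 3)) *
          (∑ z ∈ OmegaFull.filter (fun z => nonneg3 (((a : ℤ), (b : ℤ), (c : ℤ)) + z)),
            PowerSeries.C (wt α β z) * Gser α β (((a : ℤ), (b : ℤ), (c : ℤ)) + z))
        - ∑ z ∈ OmegaFull.filter (fun z => nonneg3 (((a : ℤ), (b : ℤ), (c : ℤ)) + z)),
            PowerSeries.C (wt α β z) * Kz p (((a : ℤ), (b : ℤ), (c : ℤ)) + z) := by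
    rw [Finset.mul_sum, ← Finset.sum_sub_distrib]
    exact Finset.sum_congr rfl fun z _ => by ring
  rw [h1]
  ring

end Main
section Induct
open PowerSeries

lemma coeff_Ez (α β : ℚ) (p : PowerSeries ℚ) (hp0 : PowerSeries.constantCoeff p = 0)
    (hp : p = PowerSeries.C (α + β) * PowerSeries.X * (1 + p + p ^ 2)) :
    ∀ n (a b c : ℕ),
      (PowerSeries.coeff n) (Ez α β p (a + b + c) ((a : ℤ), (b : ℤ), (c : ℤ))) = 0 := by
  intro n
  induction n with
  | zero =>
    intro a b c
    rw [Ez_rec α β p hp0 hp]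
    simp
  | succ n ih =>
    intro a b c
    rw [Ez_rec α β p hp0 hp, PowerSeries.coeff_succ_X_mul, map_sum]
    refine Finset.sum_eq_zero fun z hz => ?_
    rw [Finset.mem_filter] at hz
    obtain ⟨z1, z2, z3⟩ := z
    obtain ⟨hz1, hz2⟩ := hz
    have hsum : z1 + z2 + z3 = 0 := by
      rw [omega_expand] at hz1
      simp only [Finset.mem_insert, Finset.mem_singleton, Prod.mk.injEq] at hz1
      rcases hz1 with ⟨h1,h2,h3⟩|⟨h1,h2,h3⟩|⟨h1,h2,h3⟩|⟨h1,h2,h3⟩|⟨h1,h2,h3⟩|⟨h1,h2,h3⟩ <;>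
        omega
    have hnn : 0 ≤ (a : ℤ) + z1 ∧ 0 ≤ (b : ℤ) + z2 ∧ 0 ≤ (c : ℤ) + z3 := by
      simpa [nonneg3, Prod.mk_add_mk] using hz2
    set a' := ((a : ℤ) + z1).toNat with ha'
    set b' := ((b : ℤ) + z2).toNat with hb'
    set c' := ((c : ℤ) + z3).toNat with hc'
    have hpt : ((a : ℤ), (b : ℤ), (c : ℤ)) + (z1, z2, z3) =
        ((a' : ℤ), (b' : ℤ), (c' : ℤ)) := by
      simp only [Prod.mk_add_mk, Prod.mk.injEq]
      refine ⟨by omega, by omega, by omega⟩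
    have hN : a + b + c = a' + b' + c' := by omega
    rw [hpt, PowerSeries.coeff_C_mul, hN, ih a' b' c', mul_zero]

end Induct
end TriAux

open TriAux

/-- The weighted generating function of triangle-model walks starting at
`(u,v,w)` satisfies the closed form of Theorem 1 of Mortimer–Prellberg. -/
theorem triangle_weighted_gf (u v w : ℕ) (α β : ℚ) (p : PowerSeries ℚ)
    (hp0 : PowerSeries.constantCoeff p = 0)
    (hp : p = PowerSeries.C (α + β) * PowerSeries.X * (1 + p + p ^ 2)) :
    (1 - p) ^ 3 * (1 - p ^ (u + v + w + 3)) *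
        (PowerSeries.mk fun n =>
          ∑ s ∈ triWalks ((u : ℤ), (v : ℤ), (w : ℤ)) n, α ^ countA s * β ^ countB s)
      = (1 - p ^ 3) * (1 - p ^ (u + 1)) * (1 - p ^ (v + 1)) * (1 - p ^ (w + 1)) := by
  have h0 : Ez α β p (u + v + w) ((u : ℤ), (v : ℤ), (w : ℤ)) = 0 := by
    ext n
    rw [map_zero]
    exact coeff_Ez α β p hp0 hp n u v w
  have h1 : (1 - p) ^ 3 * (1 - p ^ (u + v + w + 3)) *
      Gser α β ((u : ℤ), (v : ℤ), (w : ℤ)) = Kz p ((u : ℤ), (v : ℤ), (w : ℤ)) :=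
    sub_eq_zero.mp h0
  have hK : Kz p ((u : ℤ), (v : ℤ), (w : ℤ)) =
      (1 - p ^ 3) * (1 - p ^ (u + 1)) * (1 - p ^ (v + 1)) * (1 - p ^ (w + 1)) := by
    unfold Kz
    have e1 : ((u : ℤ) + 1).toNat = u + 1 := by omega
    have e2 : ((v : ℤ) + 1).toNat = v + 1 := by omega
    have e3 : ((w : ℤ) + 1).toNat = w + 1 := by omega
    rw [e1, e2, e3]
  rw [← hK, ← h1]
  rfl
end

section
/- Fix H, a, b ∈ ℕ and set L = 2H+1 and n = a+b. The number of n-step walks in the triangle model starting at (L,0,0) that take exactly a steps in Ω′ and exactly b steps in Ω″ equals the number of two-coloured Motzkin paths of length n in a strip of height H having exactly a steps coloured A and exactly b steps coloured B. -/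
set_option linter.unusedSectionVars false

open scoped Classical

/-- A Motzkin path of length `n` in a strip of height `H`: a sequence of heights starting
and ending at `0`, staying in `[0, H]`, with increments in `{-1, 0, 1}`. -/
def IsMotzkin (H n : ℕ) (h : Fin (n + 1) → ℤ) : Prop :=
  h 0 = 0 ∧ h (Fin.last n) = 0 ∧ (∀ i, 0 ≤ h i ∧ h i ≤ (H : ℤ)) ∧
    ∀ i : Fin n, h i.succ - h i.castSucc ∈ ({-1, 0, 1} : Set ℤ)

/-- The path has no level step at height `H`. -/
def NoLevelAtTop (H n : ℕ) (h : Fin (n + 1) → ℤ) : Prop :=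
  ∀ i : Fin n, ¬(h i.castSucc = (H : ℤ) ∧ h i.succ = (H : ℤ))

/-! ### Auxiliary arithmetic: the intertwining weights -/

def tmN (h u v : ℤ) : ℤ := max 0 (min u h - max 0 (h - v) + 1)

def tmQ (H h x y : ℤ) : ℤ := tmN h x y - tmN (2*H+2-h) x y

set_option maxHeartbeats 1000000 in
lemma tmNA (h x y : ℤ) (hx : 0 ≤ x) (hy : 0 ≤ y) (h0 : 0 ≤ h) :
    tmN h (x+1) y + tmN h (x-1) (y+1) + tmN h x (y-1)
  = tmN (h-1) x y + tmN h x y + tmN (h+1) x y := by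
  simp only [tmN]; omega

set_option maxHeartbeats 1000000 in
lemma tmNB (h x y : ℤ) (hx : 0 ≤ x) (hy : 0 ≤ y) (h0 : 0 ≤ h) :
    tmN h (x+1) (y-1) + tmN h (x-1) y + tmN h x (y+1)
  = tmN (h-1) x y + tmN h x y + tmN (h+1) x y := by
  simp only [tmN]; omega

lemma tmNrefl (t u v : ℤ) (hu : 0 ≤ u) (hv : 0 ≤ v) : tmN t u v = tmN (u+v-t) u v := by
  simp only [tmN]; omega
lemma tmNnegu (t u v : ℤ) (ht : 0 ≤ t) (hu : u < 0) : tmN t u v = 0 := by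
  simp only [tmN]; omega
lemma tmNnegv (t u v : ℤ) (ht : 0 ≤ t) (hv : v < 0) : tmN t u v = 0 := by
  simp only [tmN]; omega

lemma tmQzero (H x y : ℤ) (hx : 0 ≤ x) (hy : 0 ≤ y) (hs : x + y ≤ 2*H+1) : tmQ H 0 x y = 1 := by
  simp only [tmQ, tmN]; omega

lemma tmQneg (H x y : ℤ) (hx : 0 ≤ x) (hy : 0 ≤ y) (hs : x + y ≤ 2*H+1) : tmQ H (-1) x y = 0 := by
  simp only [tmQ, tmN]; omega

lemma tmQtop (H x y : ℤ) : tmQ H (H+1) x y = 0 := by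
  simp only [tmQ]; ring_nf

lemma tmQcorner (H h : ℤ) (h0 : 0 ≤ h) (hH : h ≤ H) :
    tmQ H h (2*H+1) 0 = if h = 0 then 1 else 0 := by
  simp only [tmQ, tmN]; split_ifs <;> omega

lemma tmLocA (H h x y z : ℤ) (hx : 0 ≤ x) (hy : 0 ≤ y) (hz : 0 ≤ z)
    (hs : x+y+z = 2*H+1) (h0 : 0 ≤ h) (hH : h ≤ H) :
    (if 0 ≤ z-1 then tmQ H h (x+1) y else 0)
  + (if 0 ≤ x-1 then tmQ H h (x-1) (y+1) else 0)
  + (if 0 ≤ y-1 then tmQ H h x (y-1) else 0)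
  = tmQ H (h-1) x y + tmQ H h x y + tmQ H (h+1) x y := by
  have ht1 : (if 0 ≤ z-1 then tmQ H h (x+1) y else 0) = tmQ H h (x+1) y := by
    split_ifs with hc
    · rfl
    · rw [tmQ, tmNrefl h (x+1) y (by omega) hy]
      have : x+1+y-h = 2*H+2-h := by omega
      rw [this, sub_self]
  have ht2 : (if 0 ≤ x-1 then tmQ H h (x-1) (y+1) else 0) = tmQ H h (x-1) (y+1) := by
    split_ifs with hc
    · rfl
    · rw [tmQ, tmNnegu h _ _ h0 (by omega), tmNnegu _ _ _ (by omega) (by omega), sub_self]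
  have ht3 : (if 0 ≤ y-1 then tmQ H h x (y-1) else 0) = tmQ H h x (y-1) := by
    split_ifs with hc
    · rfl
    · rw [tmQ, tmNnegv h _ _ h0 (by omega), tmNnegv _ _ _ (by omega) (by omega), sub_self]
  rw [ht1, ht2, ht3]
  simp only [tmQ]
  have e1 : 2*H+2-(h-1) = (2*H+2-h)+1 := by ring
  have e2 : 2*H+2-(h+1) = (2*H+2-h)-1 := by ring
  rw [e1, e2]
  linarith [tmNA h x y hx hy h0, tmNA (2*H+2-h) x y hx hy (by omega)]

lemma tmLocB (H h x y z : ℤ) (hx : 0 ≤ x) (hy : 0 ≤ y) (hz : 0 ≤ z)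
    (hs : x+y+z = 2*H+1) (h0 : 0 ≤ h) (hH : h ≤ H) :
    (if 0 ≤ y-1 then tmQ H h (x+1) (y-1) else 0)
  + (if 0 ≤ x-1 then tmQ H h (x-1) y else 0)
  + (if 0 ≤ z-1 then tmQ H h x (y+1) else 0)
  = tmQ H (h-1) x y + tmQ H h x y + tmQ H (h+1) x y := by
  have ht1 : (if 0 ≤ y-1 then tmQ H h (x+1) (y-1) else 0) = tmQ H h (x+1) (y-1) := by
    split_ifs with hc
    · rfl
    · rw [tmQ, tmNnegv h _ _ h0 (by omega), tmNnegv _ _ _ (by omega) (by omega), sub_self]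
  have ht2 : (if 0 ≤ x-1 then tmQ H h (x-1) y else 0) = tmQ H h (x-1) y := by
    split_ifs with hc
    · rfl
    · rw [tmQ, tmNnegu h _ _ h0 (by omega), tmNnegu _ _ _ (by omega) (by omega), sub_self]
  have ht3 : (if 0 ≤ z-1 then tmQ H h x (y+1) else 0) = tmQ H h x (y+1) := by
    split_ifs with hc
    · rfl
    · rw [tmQ, tmNrefl h x (y+1) hx (by omega)]
      have : x+(y+1)-h = 2*H+2-h := by omega
      rw [this, sub_self]
  rw [ht1, ht2, ht3]
  simp only [tmQ]
  have e1 : 2*H+2-(h-1) = (2*H+2-h)+1 := by ring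
  have e2 : 2*H+2-(h+1) = (2*H+2-h)-1 := by ring
  rw [e1, e2]
  linarith [tmNB h x y hx hy h0, tmNB (2*H+2-h) x y hx hy (by omega)]

/-! ### Generic counting of constrained walks -/

section generic

variable {α : Type*} [DecidableEq α] [AddCommMonoid α]

/-- partial sum of the first `i` steps -/
def tmPsum {n : ℕ} (s : Fin n → α) (i : ℕ) : α :=
  ∑ j ∈ Finset.univ.filter (fun j : Fin n => (j : ℕ) < i), s j

lemma tmPsum_zero {n : ℕ} (s : Fin n → α) : tmPsum s 0 = 0 := by
  simp [tmPsum]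

lemma tmPsum_zero' (s : Fin 0 → α) (i : ℕ) : tmPsum s i = 0 := by
  simp [tmPsum, Finset.filter_eq_empty_iff]

lemma tmPsum_succ {n : ℕ} (s : Fin (n+1) → α) (i : ℕ) :
    tmPsum s (i+1) = s 0 + tmPsum (fun j : Fin n => s j.succ) i := by
  simp only [tmPsum, Finset.sum_filter, Fin.sum_univ_succ, Fin.val_zero,
    Nat.zero_lt_succ, if_true, Fin.val_succ]
  congr 1
  refine Finset.sum_congr rfl (fun j _ => ?_)
  congr 1
  simp [Nat.succ_lt_succ_iff]

lemma tmPsum_succ_right {n : ℕ} (s : Fin n → α) (i : ℕ) (hi : i < n) :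
    tmPsum s (i+1) = tmPsum s i + s ⟨i, hi⟩ := by
  have : Finset.univ.filter (fun j : Fin n => (j : ℕ) < i + 1)
      = insert ⟨i, hi⟩ (Finset.univ.filter (fun j : Fin n => (j : ℕ) < i)) := by
    ext j
    simp only [Finset.mem_filter, Finset.mem_univ, true_and, Finset.mem_insert, Fin.ext_iff]
    omega
  rw [tmPsum, this, Finset.sum_insert (by simp), tmPsum, add_comm]

/-- recursive count of constrained walks -/
noncomputable def tmCnt (ok fm : α → Prop) : List (Finset α) → α → ℕ
  | [], x => if ok x ∧ fm x then 1 else 0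
  | Ω :: rest, x => if ok x then ∑ v ∈ Ω, tmCnt ok fm rest (x + v) else 0

lemma tmCnt_not_ok (ok fm : α → Prop) (l : List (Finset α)) (x : α) (h : ¬ ok x) :
    tmCnt ok fm l x = 0 := by
  cases l <;> simp [tmCnt, h]

lemma tmCnt_bridge (ok fm : α → Prop) : ∀ (n : ℕ) (St : Fin n → Finset α) (x : α),
    ((Fintype.piFinset St).filter
      (fun s => (∀ i ≤ n, ok (x + tmPsum s i)) ∧ fm (x + tmPsum s n))).card
    = tmCnt ok fm (List.ofFn St) x := by
  intro n
  induction n with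
  | zero =>
    intro St x
    rw [List.ofFn_zero]
    by_cases hc : ok x ∧ fm x
    · rw [Finset.filter_true_of_mem, Fintype.card_piFinset]
      · simp [tmCnt, hc]
      · intro s _
        simp [tmPsum_zero', hc.1, hc.2]
    · rw [Finset.filter_false_of_mem, Finset.card_empty]
      · simp [tmCnt, hc]
      · intro s _ hs
        exact hc ⟨by simpa [tmPsum_zero'] using hs.1 0 (Nat.zero_le _),
          by simpa [tmPsum_zero'] using hs.2⟩
  | succ n IH =>
    intro St x
    rw [List.ofFn_succ]
    by_cases hok : ok x
    · rw [show tmCnt ok fm (St 0 :: List.ofFn fun i : Fin n => St i.succ) x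
          = ∑ v ∈ St 0, tmCnt ok fm (List.ofFn fun i : Fin n => St i.succ) (x + v) from by
            simp [tmCnt, hok]]
      rw [Finset.card_eq_sum_card_fiberwise
        (f := fun s => s 0) (t := St 0)
        (fun s hs => (Fintype.mem_piFinset.mp (Finset.mem_filter.mp hs).1) 0)]
      refine Finset.sum_congr rfl (fun v hv => ?_)
      rw [← IH (fun i => St i.succ) (x + v)]
      refine Finset.card_bij' (fun s _ => fun j : Fin n => s j.succ)
        (fun t _ => Fin.cons v t) ?_ ?_ ?_ ?_
      · intro s hs
        simp only [Finset.mem_filter, Fintype.mem_piFinset] at hs ⊢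
        obtain ⟨⟨h1, h2, h3⟩, h4⟩ := hs
        refine ⟨fun j => h1 j.succ, fun i hi => ?_, ?_⟩
        · have := h2 (i+1) (by omega)
          rwa [tmPsum_succ, ← add_assoc, h4] at this
        · have := h3
          rwa [tmPsum_succ, ← add_assoc, h4] at this
      · intro t ht
        simp only [Finset.mem_filter, Fintype.mem_piFinset] at ht ⊢
        obtain ⟨h1, h2, h3⟩ := ht
        have htail : (fun j : Fin n => (Fin.cons v t : Fin (n+1) → α) j.succ) = t := by
          funext j; simp
        refine ⟨⟨fun j => ?_, fun i hi => ?_, ?_⟩, by simp⟩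
        · induction j using Fin.cases with
          | zero => simpa using hv
          | succ j => simpa using h1 j
        · match i with
          | 0 => simpa [tmPsum_zero] using hok
          | (k+1) =>
            rw [tmPsum_succ, Fin.cons_zero, ← add_assoc, htail]
            exact h2 k (by omega)
        · rw [tmPsum_succ, Fin.cons_zero, ← add_assoc, htail]
          exact h3
      · intro s hs
        simp only [Finset.mem_filter] at hs
        funext j
        induction j using Fin.cases with
        | zero => simp [hs.2]
        | succ j => simp
      · intro t ht
        funext j; simp
    · rw [Finset.filter_false_of_mem, Finset.card_empty]
      · simp [tmCnt, hok]
      · intro s _ hs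
        exact hok (by simpa [tmPsum_zero] using hs.1 0 (Nat.zero_le _))

end generic

lemma tmFilterInst {α : Type*} (p : α → Prop) (i1 i2 : DecidablePred p) (s : Finset α) :
    @Finset.filter α p i1 s = @Finset.filter α p i2 s := by
  cases Subsingleton.elim i1 i2
  rfl


/-! ### Motzkin strip counts -/

def MStep : Finset ℤ := {-1, 0, 1}

def okH (H : ℕ) (t : ℤ) : Prop := 0 ≤ t ∧ t ≤ (H : ℤ)

noncomputable def tmMC (H k : ℕ) (t : ℤ) : ℕ :=
  tmCnt (okH H) (fun u => u = 0) (List.replicate k MStep) t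

lemma tmMC_out (H k : ℕ) (t : ℤ) (h : ¬ okH H t) : tmMC H k t = 0 :=
  tmCnt_not_ok _ _ _ _ h

lemma tmMC_zero (H : ℕ) (t : ℤ) : tmMC H 0 t = if okH H t ∧ t = 0 then 1 else 0 := by
  rw [tmMC, List.replicate_zero]
  simp only [tmCnt]
  split_ifs <;> rfl

lemma tmSum3 (F : ℤ → ℕ) : ∑ v ∈ MStep, F v = F (-1) + F 0 + F 1 := by
  rw [show MStep = insert (-1) (insert 0 {1}) from rfl,
    Finset.sum_insert (by decide), Finset.sum_insert (by decide), Finset.sum_singleton]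
  omega

lemma tmMC_succ (H k : ℕ) (t : ℤ) (ht : okH H t) :
    tmMC H (k+1) t = tmMC H k (t-1) + tmMC H k t + tmMC H k (t+1) := by
  rw [tmMC, List.replicate_succ]
  rw [show tmCnt (okH H) (fun u : ℤ => u = 0) (MStep :: List.replicate k MStep) t
      = if okH H t then ∑ v ∈ MStep, tmCnt (okH H) (fun u : ℤ => u = 0) (List.replicate k MStep) (t + v) else 0
      from by simp only [tmCnt]]
  rw [if_pos ht, tmSum3]
  have e1 : t + -1 = t - 1 := by ring
  rw [e1, add_zero]
  simp only [tmMC]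

/-! ### Summation-by-parts in the strip -/

lemma tmShift (H : ℕ) (f g : ℤ → ℤ) (hf1 : f (-1) = 0) (hg2 : g ((H:ℤ)+1) = 0) :
    ∑ h ∈ Finset.Icc (0:ℤ) (H:ℤ), f (h-1) * g h
  = ∑ h ∈ Finset.Icc (0:ℤ) (H:ℤ), f h * g (h+1) := by
  have s1 : ∑ h ∈ Finset.Icc (0:ℤ) (H:ℤ), f (h-1) * g h
      = ∑ h ∈ Finset.Icc (1:ℤ) (H:ℤ), f (h-1) * g h := by
    refine (Finset.sum_subset (fun u hu => ?_) (fun u hu hnu => ?_)).symm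
    · simp only [Finset.mem_Icc] at hu ⊢; omega
    · simp only [Finset.mem_Icc] at hu hnu
      have : u = 0 := by omega
      subst this
      norm_num [hf1]
  have s2 : ∑ h ∈ Finset.Icc (1:ℤ) (H:ℤ), f (h-1) * g h
      = ∑ h ∈ Finset.Icc (0:ℤ) ((H:ℤ)-1), f h * g (h+1) := by
    refine Finset.sum_nbij' (fun h => h - 1) (fun h => h + 1) ?_ ?_ ?_ ?_ ?_
    · intro u hu; simp only [Finset.mem_Icc] at hu ⊢; omega
    · intro u hu; simp only [Finset.mem_Icc] at hu ⊢; omega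
    · intro u _; ring
    · intro u _; ring
    · intro u _
      have e : u - 1 + 1 = u := by ring
      rw [e]
  have s3 : ∑ h ∈ Finset.Icc (0:ℤ) ((H:ℤ)-1), f h * g (h+1)
      = ∑ h ∈ Finset.Icc (0:ℤ) (H:ℤ), f h * g (h+1) := by
    refine Finset.sum_subset (fun u hu => ?_) (fun u hu hnu => ?_)
    · simp only [Finset.mem_Icc] at hu ⊢; omega
    · simp only [Finset.mem_Icc] at hu hnu
      have : u = (H:ℤ) := by omega
      subst this
      rw [hg2, mul_zero]
  rw [s1, s2, s3]

lemma tmSwap (H : ℕ) (f g : ℤ → ℤ) (hf1 : f (-1) = 0) (hf2 : f ((H:ℤ)+1) = 0)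
    (hg1 : g (-1) = 0) (hg2 : g ((H:ℤ)+1) = 0) :
    ∑ h ∈ Finset.Icc (0:ℤ) (H:ℤ), (f (h-1) + f h + f (h+1)) * g h
  = ∑ h ∈ Finset.Icc (0:ℤ) (H:ℤ), f h * (g (h-1) + g h + g (h+1)) := by
  have k1 : ∑ h ∈ Finset.Icc (0:ℤ) (H:ℤ), f (h-1) * g h
      = ∑ h ∈ Finset.Icc (0:ℤ) (H:ℤ), f h * g (h+1) := tmShift H f g hf1 hg2
  have k2 : ∑ h ∈ Finset.Icc (0:ℤ) (H:ℤ), g (h-1) * f h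
      = ∑ h ∈ Finset.Icc (0:ℤ) (H:ℤ), g h * f (h+1) := tmShift H g f hg1 hf2
  simp only [add_mul, mul_add, Finset.sum_add_distrib]
  rw [k1]
  have k2' : ∑ h ∈ Finset.Icc (0:ℤ) (H:ℤ), f (h+1) * g h
      = ∑ h ∈ Finset.Icc (0:ℤ) (H:ℤ), f h * g (h-1) := by
    calc ∑ h ∈ Finset.Icc (0:ℤ) (H:ℤ), f (h+1) * g h
        = ∑ h ∈ Finset.Icc (0:ℤ) (H:ℤ), g h * f (h+1) := by
          exact Finset.sum_congr rfl (fun h _ => mul_comm _ _)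
      _ = ∑ h ∈ Finset.Icc (0:ℤ) (H:ℤ), g (h-1) * f h := k2.symm
      _ = ∑ h ∈ Finset.Icc (0:ℤ) (H:ℤ), f h * g (h-1) := by
          exact Finset.sum_congr rfl (fun h _ => mul_comm _ _)
  rw [k2']
  ring

/-! ### The core weighted-count lemma -/

def tmOm (c : Bool) : Finset (ℤ × ℤ × ℤ) := if c then OmegaA else OmegaB

lemma tmCore (H : ℕ) : ∀ (w : List Bool) (x y z : ℤ), 0 ≤ x → 0 ≤ y → 0 ≤ z →
    x + y + z = 2*(H:ℤ)+1 →
    ((tmCnt nonneg3 (fun _ => True) (w.map tmOm) (x, y, z) : ℕ) : ℤ)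
      = ∑ h ∈ Finset.Icc (0:ℤ) (H:ℤ), tmQ H h x y * (tmMC H w.length h : ℤ) := by
  intro w
  induction w with
  | nil =>
    intro x y z hx hy hz hs
    have hp : nonneg3 (x, y, z) := ⟨hx, hy, hz⟩
    rw [List.map_nil]
    rw [show tmCnt nonneg3 (fun _ => True) ([] : List (Finset (ℤ×ℤ×ℤ))) (x,y,z)
        = if nonneg3 (x,y,z) ∧ True then 1 else 0 from by
          simp only [tmCnt]; split_ifs <;> rfl]
    rw [if_pos ⟨hp, trivial⟩]
    rw [Finset.sum_eq_single_of_mem (0:ℤ)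
      (by simp only [Finset.mem_Icc]; exact ⟨le_refl _, by positivity⟩)
      (fun b hb hb0 => by
        rw [List.length_nil, tmMC_zero, if_neg (by tauto)]
        simp)]
    rw [List.length_nil, tmMC_zero, if_pos ⟨⟨le_refl _, by positivity⟩, rfl⟩]
    rw [tmQzero H x y hx hy (by omega)]
    norm_num
  | cons c w' IH =>
    intro x y z hx hy hz hs
    have hp : nonneg3 (x, y, z) := ⟨hx, hy, hz⟩
    rw [List.map_cons]
    rw [show tmCnt nonneg3 (fun _ => True) (tmOm c :: w'.map tmOm) (x,y,z)
        = if nonneg3 (x,y,z) then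
            ∑ v ∈ tmOm c, tmCnt nonneg3 (fun _ => True) (w'.map tmOm) ((x,y,z) + v)
          else 0 from by simp only [tmCnt]]
    rw [if_pos hp]
    set k := w'.length with hk
    have hlen : (c :: w').length = k + 1 := rfl
    rw [hlen]
    have hRHS : ∀ h : ℤ, h ∈ Finset.Icc (0:ℤ) (H:ℤ) →
        tmQ (H:ℤ) h x y * (tmMC H (k+1) h : ℤ)
        = tmQ (H:ℤ) h x y * ((tmMC H k (h-1) : ℤ) + (tmMC H k h : ℤ) + (tmMC H k (h+1) : ℤ)) := by
      intro h hh
      simp only [Finset.mem_Icc] at hh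
      rw [tmMC_succ H k h ⟨hh.1, hh.2⟩]
      push_cast
      ring
    rw [Finset.sum_congr rfl hRHS]
    have hg1 : ((tmMC H k (-1) : ℕ) : ℤ) = 0 := by
      rw [tmMC_out H k (-1) (by intro hcon; obtain ⟨h1, -⟩ := hcon; omega)]
      norm_num
    have hg2 : ((tmMC H k ((H:ℤ)+1) : ℕ) : ℤ) = 0 := by
      rw [tmMC_out H k ((H:ℤ)+1) (by intro hcon; obtain ⟨-, h2⟩ := hcon; omega)]
      norm_num
    rw [← tmSwap H (fun t => tmQ (H:ℤ) t x y) (fun t => (tmMC H k t : ℤ))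
      (tmQneg H x y hx hy (by omega)) (tmQtop (H:ℤ) x y) hg1 hg2]
    -- now LHS: sum over steps; RHS: ∑ (Q(h-1)+Q h+Q(h+1)) * MC k h
    cases c with
    | true =>
      have hOm : tmOm true = ({((1:ℤ),(0:ℤ),(-1:ℤ)), (-1,1,0), (0,-1,1)} : Finset (ℤ×ℤ×ℤ)) := rfl
      rw [hOm, Finset.sum_insert (by decide), Finset.sum_insert (by decide),
        Finset.sum_singleton]
      have e1 : (x,y,z) + ((1:ℤ),(0:ℤ),(-1:ℤ)) = (x+1, y, z-1) := by
        simp only [Prod.mk_add_mk, Prod.mk.injEq, true_and, and_true]; omega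
      have e2 : (x,y,z) + ((-1:ℤ),(1:ℤ),(0:ℤ)) = (x-1, y+1, z) := by
        simp only [Prod.mk_add_mk, Prod.mk.injEq, true_and, and_true]; omega
      have e3 : (x,y,z) + ((0:ℤ),(-1:ℤ),(1:ℤ)) = (x, y-1, z+1) := by
        simp only [Prod.mk_add_mk, Prod.mk.injEq, true_and, and_true]; omega
      rw [e1, e2, e3]
      have T1 : ((tmCnt nonneg3 (fun _ => True) (w'.map tmOm) (x+1, y, z-1) : ℕ) : ℤ)
          = ∑ h ∈ Finset.Icc (0:ℤ) (H:ℤ),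
              (if 0 ≤ z-1 then tmQ (H:ℤ) h (x+1) y else 0) * (tmMC H k h : ℤ) := by
        by_cases hzz : 0 ≤ z - 1
        · rw [IH (x+1) y (z-1) (by omega) hy hzz (by omega)]
          exact Finset.sum_congr rfl (fun h _ => by rw [if_pos hzz])
        · rw [tmCnt_not_ok _ _ _ _ (by
            intro hn; exact hzz hn.2.2)]
          push_cast
          rw [Finset.sum_congr rfl (fun h _ => by rw [if_neg hzz, zero_mul]),
            Finset.sum_const_zero]
      have T2 : ((tmCnt nonneg3 (fun _ => True) (w'.map tmOm) (x-1, y+1, z) : ℕ) : ℤ)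
          = ∑ h ∈ Finset.Icc (0:ℤ) (H:ℤ),
              (if 0 ≤ x-1 then tmQ (H:ℤ) h (x-1) (y+1) else 0) * (tmMC H k h : ℤ) := by
        by_cases hxx : 0 ≤ x - 1
        · rw [IH (x-1) (y+1) z hxx (by omega) hz (by omega)]
          exact Finset.sum_congr rfl (fun h _ => by rw [if_pos hxx])
        · rw [tmCnt_not_ok _ _ _ _ (by intro hn; exact hxx hn.1)]
          push_cast
          rw [Finset.sum_congr rfl (fun h _ => by rw [if_neg hxx, zero_mul]),
            Finset.sum_const_zero]
      have T3 : ((tmCnt nonneg3 (fun _ => True) (w'.map tmOm) (x, y-1, z+1) : ℕ) : ℤ)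
          = ∑ h ∈ Finset.Icc (0:ℤ) (H:ℤ),
              (if 0 ≤ y-1 then tmQ (H:ℤ) h x (y-1) else 0) * (tmMC H k h : ℤ) := by
        by_cases hyy : 0 ≤ y - 1
        · rw [IH x (y-1) (z+1) hx hyy (by omega) (by omega)]
          exact Finset.sum_congr rfl (fun h _ => by rw [if_pos hyy])
        · rw [tmCnt_not_ok _ _ _ _ (by intro hn; exact hyy hn.2.1)]
          push_cast
          rw [Finset.sum_congr rfl (fun h _ => by rw [if_neg hyy, zero_mul]),
            Finset.sum_const_zero]
      push_cast
      rw [T1, T2, T3, ← Finset.sum_add_distrib, ← Finset.sum_add_distrib]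
      refine Finset.sum_congr rfl (fun h hh => ?_)
      simp only [Finset.mem_Icc] at hh
      rw [← add_mul, ← add_mul, ← add_assoc]
      rw [tmLocA (H:ℤ) h x y z hx hy hz hs hh.1 hh.2]
    | false =>
      have hOm : tmOm false = ({((1:ℤ),(-1:ℤ),(0:ℤ)), (-1,0,1), (0,1,-1)} : Finset (ℤ×ℤ×ℤ)) := rfl
      rw [hOm, Finset.sum_insert (by decide), Finset.sum_insert (by decide),
        Finset.sum_singleton]
      have e1 : (x,y,z) + ((1:ℤ),(-1:ℤ),(0:ℤ)) = (x+1, y-1, z) := by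
        simp only [Prod.mk_add_mk, Prod.mk.injEq, true_and, and_true]; omega
      have e2 : (x,y,z) + ((-1:ℤ),(0:ℤ),(1:ℤ)) = (x-1, y, z+1) := by
        simp only [Prod.mk_add_mk, Prod.mk.injEq, true_and, and_true]; omega
      have e3 : (x,y,z) + ((0:ℤ),(1:ℤ),(-1:ℤ)) = (x, y+1, z-1) := by
        simp only [Prod.mk_add_mk, Prod.mk.injEq, true_and, and_true]; omega
      rw [e1, e2, e3]
      have T1 : ((tmCnt nonneg3 (fun _ => True) (w'.map tmOm) (x+1, y-1, z) : ℕ) : ℤ)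
          = ∑ h ∈ Finset.Icc (0:ℤ) (H:ℤ),
              (if 0 ≤ y-1 then tmQ (H:ℤ) h (x+1) (y-1) else 0) * (tmMC H k h : ℤ) := by
        by_cases hyy : 0 ≤ y - 1
        · rw [IH (x+1) (y-1) z (by omega) hyy hz (by omega)]
          exact Finset.sum_congr rfl (fun h _ => by rw [if_pos hyy])
        · rw [tmCnt_not_ok _ _ _ _ (by intro hn; exact hyy hn.2.1)]
          push_cast
          rw [Finset.sum_congr rfl (fun h _ => by rw [if_neg hyy, zero_mul]),
            Finset.sum_const_zero]
      have T2 : ((tmCnt nonneg3 (fun _ => True) (w'.map tmOm) (x-1, y, z+1) : ℕ) : ℤ)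
          = ∑ h ∈ Finset.Icc (0:ℤ) (H:ℤ),
              (if 0 ≤ x-1 then tmQ (H:ℤ) h (x-1) y else 0) * (tmMC H k h : ℤ) := by
        by_cases hxx : 0 ≤ x - 1
        · rw [IH (x-1) y (z+1) hxx hy (by omega) (by omega)]
          exact Finset.sum_congr rfl (fun h _ => by rw [if_pos hxx])
        · rw [tmCnt_not_ok _ _ _ _ (by intro hn; exact hxx hn.1)]
          push_cast
          rw [Finset.sum_congr rfl (fun h _ => by rw [if_neg hxx, zero_mul]),
            Finset.sum_const_zero]
      have T3 : ((tmCnt nonneg3 (fun _ => True) (w'.map tmOm) (x, y+1, z-1) : ℕ) : ℤ)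
          = ∑ h ∈ Finset.Icc (0:ℤ) (H:ℤ),
              (if 0 ≤ z-1 then tmQ (H:ℤ) h x (y+1) else 0) * (tmMC H k h : ℤ) := by
        by_cases hzz : 0 ≤ z - 1
        · rw [IH x (y+1) (z-1) hx (by omega) hzz (by omega)]
          exact Finset.sum_congr rfl (fun h _ => by rw [if_pos hzz])
        · rw [tmCnt_not_ok _ _ _ _ (by intro hn; exact hzz hn.2.2)]
          push_cast
          rw [Finset.sum_congr rfl (fun h _ => by rw [if_neg hzz, zero_mul]),
            Finset.sum_const_zero]
      push_cast
      rw [T1, T2, T3, ← Finset.sum_add_distrib, ← Finset.sum_add_distrib]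
      refine Finset.sum_congr rfl (fun h hh => ?_)
      simp only [Finset.mem_Icc] at hh
      rw [← add_mul, ← add_mul, ← add_assoc]
      rw [tmLocB (H:ℤ) h x y z hx hy hz hs hh.1 hh.2]

/-! ### Counting Motzkin paths -/

lemma tmHeights {n : ℕ} (h : Fin (n+1) → ℤ) (h0 : h 0 = 0) :
    ∀ k (hk : k ≤ n), tmPsum (fun i : Fin n => h i.succ - h i.castSucc) k = h ⟨k, by omega⟩ := by
  intro k
  induction k with
  | zero =>
    intro hk
    rw [tmPsum_zero]
    have e : (⟨0, by omega⟩ : Fin (n+1)) = 0 := by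
      simp [Fin.ext_iff]
    rw [e, h0]
  | succ k IHk =>
    intro hk
    rw [tmPsum_succ_right _ k (by omega), IHk (by omega)]
    have e1 : (⟨k, by omega⟩ : Fin n).succ = ⟨k+1, by omega⟩ := by
      simp [Fin.ext_iff]
    have e2 : (⟨k, by omega⟩ : Fin n).castSucc = ⟨k, by omega⟩ := by
      simp [Fin.ext_iff]
    rw [e1, e2]
    ring

lemma tmMotzkinCard (H n : ℕ) :
    Nat.card {h : Fin (n+1) → ℤ // IsMotzkin H n h} = tmMC H n 0 := by
  have e : {h : Fin (n+1) → ℤ // IsMotzkin H n h} ≃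
      {d : Fin n → ℤ // d ∈ (Fintype.piFinset (fun _ : Fin n => MStep)).filter
        (fun d => (∀ i ≤ n, okH H ((0:ℤ) + tmPsum d i)) ∧ ((0:ℤ) + tmPsum d n) = 0)} := by
    refine ⟨fun hh => ⟨fun i => hh.1 i.succ - hh.1 i.castSucc, ?_⟩,
      fun dd => ⟨fun i => tmPsum dd.1 (i : ℕ), ?_⟩, ?_, ?_⟩
    · obtain ⟨h, hm0, hml, hmr, hmstep⟩ := hh
      simp only [Finset.mem_filter, Fintype.mem_piFinset]
      refine ⟨fun i => ?_, fun i hi => ?_, ?_⟩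
      · have := hmstep i
        simp only [Set.mem_insert_iff, Set.mem_singleton_iff] at this
        simp only [MStep, Finset.mem_insert, Finset.mem_singleton]
        tauto
      · rw [zero_add, tmHeights h hm0 i hi]
        exact ⟨(hmr _).1, (hmr _).2⟩
      · rw [zero_add, tmHeights h hm0 n (le_refl _)]
        have e : (⟨n, by omega⟩ : Fin (n+1)) = Fin.last n := by
          simp [Fin.ext_iff]
        rw [e, hml]
    · obtain ⟨d, hd⟩ := dd
      simp only [Finset.mem_filter, Fintype.mem_piFinset] at hd
      obtain ⟨h1, h2, h3⟩ := hd
      refine ⟨?_, ?_, fun i => ?_, fun i => ?_⟩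
      · show tmPsum d ((0 : Fin (n+1)) : ℕ) = 0
        rw [Fin.val_zero, tmPsum_zero]
      · show tmPsum d ((Fin.last n : Fin (n+1)) : ℕ) = 0
        rw [Fin.val_last]
        rw [zero_add] at h3
        exact h3
      · have := h2 (i : ℕ) (by omega)
        rw [zero_add] at this
        exact this
      · show tmPsum d ((i.succ : Fin (n+1)) : ℕ) - tmPsum d ((i.castSucc : Fin (n+1)) : ℕ) ∈ _
        rw [Fin.val_succ, Fin.coe_castSucc, tmPsum_succ_right d (i : ℕ) i.isLt]
        have e : (⟨(i : ℕ), i.isLt⟩ : Fin n) = i := by simp [Fin.ext_iff]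
        rw [e]
        have := h1 i
        simp only [MStep, Finset.mem_insert, Finset.mem_singleton] at this
        simp only [add_sub_cancel_left, Set.mem_insert_iff, Set.mem_singleton_iff]
        tauto
    · intro hh
      apply Subtype.ext
      funext i
      show tmPsum (fun j : Fin n => hh.1 j.succ - hh.1 j.castSucc) (i : ℕ) = hh.1 i
      rw [tmHeights hh.1 hh.2.1 (i : ℕ) (by omega)]
    · intro dd
      apply Subtype.ext
      funext i
      show tmPsum dd.1 ((i.succ : Fin (n+1)) : ℕ) - tmPsum dd.1 ((i.castSucc : Fin (n+1)) : ℕ) = dd.1 i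
      rw [Fin.val_succ, Fin.coe_castSucc, tmPsum_succ_right dd.1 (i : ℕ) i.isLt]
      have e : (⟨(i : ℕ), i.isLt⟩ : Fin n) = i := by simp [Fin.ext_iff]
      rw [e, add_sub_cancel_left]
  rw [Nat.card_congr e, Nat.card_eq_fintype_card, Fintype.card_coe]
  have hb := tmCnt_bridge (okH H) (fun u : ℤ => u = 0) n (fun _ => MStep) 0
  rw [List.ofFn_const] at hb
  have hb2 : tmCnt (okH H) (fun u : ℤ => u = 0) (List.replicate n MStep) 0 = tmMC H n 0 := rfl
  convert hb.trans hb2 using 2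
  exact tmFilterInst _ _ _ _

/-! ### The main theorem -/

/-- Walks from the corner of a triangle of odd side-length `L = 2H+1` with
`a` steps in Ω′ and `b` steps in Ω″ are equinumerous with two-coloured Motzkin paths in a
strip of height `H` with `a` steps of colour A and `b` steps of colour B. -/
theorem corner_walks_eq_twocoloured_motzkin_odd (H a b : ℕ) :
    ((triWalks (((2 * H + 1 : ℕ) : ℤ), 0, 0) (a + b)).filter
        (fun s => countA s = a ∧ countB s = b)).card
      = Nat.card {hc : (Fin (a + b + 1) → ℤ) × (Fin (a + b) → Bool) //
          IsMotzkin H (a + b) hc.1 ∧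
          (Finset.univ.filter fun i => hc.2 i = true).card = a ∧
          (Finset.univ.filter fun i => hc.2 i = false).card = b} := by
  classical
  set n := a + b with hn
  set x₀ : ℤ × ℤ × ℤ := (((2 * H + 1 : ℕ) : ℤ), 0, 0) with hx₀
  -- the set of admissible colour words
  set W : Finset (Fin n → Bool) :=
    Finset.univ.filter (fun w : Fin n → Bool => (Finset.univ.filter fun j => w j = true).card = a)
    with hW
  have hdisj : ∀ v ∈ OmegaB, v ∉ OmegaA := by decide
  have hwordcount : ∀ w : Fin n → Bool,
      (Finset.univ.filter fun j => w j = true).card = a →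
      (Finset.univ.filter fun j => w j = false).card = b := by
    intro w hw
    have := Finset.card_filter_add_card_filter_not
      (s := (Finset.univ : Finset (Fin n))) (p := fun j => w j = true)
    simp only [Finset.card_univ, Fintype.card_fin] at this
    have hfalse : (Finset.univ.filter fun j => ¬ (w j = true)).card
        = (Finset.univ.filter fun j => w j = false).card := by
      congr 1
      apply Finset.filter_congr
      intro j _
      simp [Bool.not_eq_true]
    omega
  -- Step 1: LHS = ∑ over words in W of per-word walk counts
  have step1 : ((triWalks x₀ n).filter (fun s => countA s = a ∧ countB s = b)).card
      = ∑ w ∈ W, ((Fintype.piFinset fun j : Fin n => tmOm (w j)).filter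
          (fun s => (∀ i ≤ n, nonneg3 (x₀ + tmPsum s i)) ∧ True)).card := by
    rw [triWalks, Finset.filter_filter]
    rw [Finset.card_eq_sum_card_fiberwise
      (f := fun s (j : Fin n) => decide (s j ∈ OmegaA)) (t := W)
      (fun s hs => by
        simp only [Finset.mem_coe, Finset.mem_filter] at hs
        simp only [hW, Finset.mem_coe, Finset.mem_filter, Finset.mem_univ, true_and]
        rw [← hs.2.2.1, countA]
        congr 1
        apply Finset.filter_congr
        intro j _
        simp)]
    refine Finset.sum_congr rfl (fun w hw => ?_)
    simp only [hW, Finset.mem_filter, Finset.mem_univ, true_and] at hw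
    congr 1
    apply Finset.ext
    intro s
    simp only [Finset.mem_filter, Fintype.mem_piFinset]
    constructor
    · rintro ⟨⟨hfull, hsafe, hca, hcb⟩, hword⟩
      refine ⟨fun j => ?_, fun i hi => hsafe i hi, trivial⟩
      cases hwj : w j with
      | false =>
        have hj : decide (s j ∈ OmegaA) = false := by rw [congrFun hword j, hwj]
        have hnA : s j ∉ OmegaA := of_decide_eq_false hj
        have hB : s j ∈ OmegaB := by
          have := hfull j
          rw [OmegaFull, Finset.mem_union] at this
          tauto
        simpa [tmOm] using hB
      | true =>
        have hj : decide (s j ∈ OmegaA) = true := by rw [congrFun hword j, hwj]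
        simpa [tmOm] using of_decide_eq_true hj
    · rintro ⟨hstep, hsafe, -⟩
      have hmem : ∀ j, (w j = true → s j ∈ OmegaA) ∧ (w j = false → s j ∈ OmegaB) := by
        intro j
        have := hstep j
        constructor
        · intro hwj; rw [hwj] at this; simpa [tmOm] using this
        · intro hwj; rw [hwj] at this; simpa [tmOm] using this
      have hword : (fun j : Fin n => decide (s j ∈ OmegaA)) = w := by
        funext j
        cases hwj : w j with
        | false => exact decide_eq_false (hdisj _ ((hmem j).2 hwj))
        | true => exact decide_eq_true ((hmem j).1 hwj)
      have hcA : countA s = a := by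
        rw [countA, ← hw]
        congr 1
        apply Finset.filter_congr
        intro j _
        constructor
        · intro hj
          cases hwj : w j with
          | false => exact absurd hj (hdisj _ ((hmem j).2 hwj))
          | true => rfl
        · intro hj
          exact (hmem j).1 hj
      have hcB : countB s = b := by
        rw [countB]
        have heq : (Finset.univ.filter fun j => s j ∈ OmegaB)
            = (Finset.univ.filter fun j => w j = false) := by
          apply Finset.filter_congr
          intro j _
          constructor
          · intro hj
            cases hwj : w j with
            | false => rfl
            | true => exact absurd ((hmem j).1 hwj) (fun hA => hdisj _ hj hA)
          · intro hj
            exact (hmem j).2 hj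
        rw [heq]
        exact hwordcount w hw
      refine ⟨⟨fun j => ?_, fun i hi => hsafe i hi, hcA, hcB⟩, hword⟩
      rw [OmegaFull, Finset.mem_union]
      cases hwj : w j with
      | false => right; exact (hmem j).2 hwj
      | true => left; exact (hmem j).1 hwj
  -- Step 2: each per-word count equals the Motzkin number
  have step2 : ∀ w : Fin n → Bool,
      ((Fintype.piFinset fun j : Fin n => tmOm (w j)).filter
          (fun s => (∀ i ≤ n, nonneg3 (x₀ + tmPsum s i)) ∧ True)).card = tmMC H n 0 := by
    intro w
    have hb := tmCnt_bridge nonneg3 (fun _ => True) n (fun j => tmOm (w j)) x₀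
    refine Eq.trans ?_ (hb.trans ?_)
    · convert rfl using 2
      exact tmFilterInst _ _ _ _
    have hofn : List.ofFn (fun j : Fin n => tmOm (w j)) = (List.ofFn w).map tmOm := by
      rw [List.map_ofFn]
      rfl
    rw [hofn]
    have hcore := tmCore H (List.ofFn w) ((2 * H + 1 : ℕ) : ℤ) 0 0
      (by positivity) (le_refl 0) (le_refl 0) (by push_cast; ring)
    have hx₀e : x₀ = (((2 * H + 1 : ℕ) : ℤ), (0:ℤ), (0:ℤ)) := rfl
    rw [hx₀e]
    have hlen : (List.ofFn w).length = n := by simp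
    rw [hlen] at hcore
    have hQc : ∀ h : ℤ, h ∈ Finset.Icc (0:ℤ) (H:ℤ) →
        tmQ (H:ℤ) h ((2 * H + 1 : ℕ) : ℤ) 0 * (tmMC H n h : ℤ)
        = (if h = 0 then (tmMC H n h : ℤ) else 0) := by
      intro h hh
      simp only [Finset.mem_Icc] at hh
      have e : ((2 * H + 1 : ℕ) : ℤ) = 2 * (H:ℤ) + 1 := by push_cast; ring
      rw [e, tmQcorner (H:ℤ) h hh.1 hh.2]
      split_ifs <;> simp
    rw [Finset.sum_congr rfl hQc] at hcore
    rw [Finset.sum_ite_eq' (Finset.Icc (0:ℤ) (H:ℤ)) 0 (fun h => (tmMC H n h : ℤ))] at hcore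
    rw [if_pos (by simp only [Finset.mem_Icc]; exact ⟨le_refl _, by positivity⟩)] at hcore
    exact_mod_cast hcore
  -- Step 3: RHS = (Motzkin count) * (number of words)
  have step3 : Nat.card {hc : (Fin (n + 1) → ℤ) × (Fin n → Bool) //
          IsMotzkin H n hc.1 ∧
          (Finset.univ.filter fun i => hc.2 i = true).card = a ∧
          (Finset.univ.filter fun i => hc.2 i = false).card = b}
      = tmMC H n 0 * W.card := by
    have esplit : {hc : (Fin (n + 1) → ℤ) × (Fin n → Bool) //
          IsMotzkin H n hc.1 ∧
          (Finset.univ.filter fun i => hc.2 i = true).card = a ∧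
          (Finset.univ.filter fun i => hc.2 i = false).card = b}
        ≃ {h : Fin (n+1) → ℤ // IsMotzkin H n h} ×
          {c : Fin n → Bool // (Finset.univ.filter fun i => c i = true).card = a ∧
            (Finset.univ.filter fun i => c i = false).card = b} :=
      { toFun := fun p => (⟨p.1.1, p.2.1⟩, ⟨p.1.2, p.2.2⟩),
        invFun := fun q => ⟨(q.1.1, q.2.1), q.1.2, q.2.2⟩,
        left_inv := fun p => rfl,
        right_inv := fun q => rfl }
    rw [Nat.card_congr esplit, Nat.card_prod, tmMotzkinCard H n]
    congr 1
    rw [Nat.card_eq_fintype_card, Fintype.card_subtype]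
    congr 1
    apply Finset.filter_congr
    intro c _
    constructor
    · intro hc; exact hc.1
    · intro hc; exact ⟨hc, hwordcount c hc⟩
  rw [show (triWalks (((2 * H + 1 : ℕ) : ℤ), 0, 0) (a + b)) = triWalks x₀ n from rfl]
  rw [step1]
  rw [Finset.sum_congr rfl (fun w _ => step2 w)]
  rw [Finset.sum_const, smul_eq_mul]
  rw [step3]
  ring
end

section
/- Fix H, n ∈ ℕ. The number of n-step walks in the triangle model starting at (2H,0,0) all of whose steps lie in the sublattice Ω′ equals the number of Motzkin paths of length n in a strip of height H having no level step at height H (i.e. no index i with h_i = h_{i+1} = H). -/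
open scoped Classical

namespace CornerAux

/-! ### Partial sums of step sequences -/

def sumLt {M : Type*} [AddCommMonoid M] {n : ℕ} (s : Fin n → M) (i : ℕ) : M :=
  ∑ j ∈ Finset.univ.filter (fun j : Fin n => (j : ℕ) < i), s j

variable {M : Type*} [AddCommMonoid M]

lemma sumLt_zero {n : ℕ} (s : Fin n → M) : sumLt s 0 = 0 := by
  simp [sumLt]

lemma sumLt_cons {n : ℕ} (d : M) (t : Fin n → M) (i : ℕ) :
    sumLt (Fin.cons d t) (i + 1) = d + sumLt t i := by
  unfold sumLt
  rw [Finset.sum_filter, Finset.sum_filter, Fin.sum_univ_succ]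
  simp [Nat.succ_lt_succ_iff]

lemma sumLt_tail {n : ℕ} (s : Fin (n + 1) → M) (i : ℕ) :
    sumLt s (i + 1) = s 0 + sumLt (Fin.tail s) i := by
  nth_rewrite 1 [← Fin.cons_self_tail s]
  rw [sumLt_cons]

lemma sumLt_succ {n : ℕ} (s : Fin n → M) (k : ℕ) (hk : k < n) :
    sumLt s (k + 1) = sumLt s k + s ⟨k, hk⟩ := by
  unfold sumLt
  have h : Finset.univ.filter (fun j : Fin n => (j : ℕ) < k + 1)
      = insert ⟨k, hk⟩ (Finset.univ.filter (fun j : Fin n => (j : ℕ) < k)) := by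
    ext j
    simp [Fin.ext_iff]
    omega
  rw [h, Finset.sum_insert (by simp)]
  exact add_comm _ _

lemma triPos_eq (start : ℤ × ℤ × ℤ) {n : ℕ} (s : Fin n → ℤ × ℤ × ℤ) (i : ℕ) :
    triPos start s i = start + sumLt s i := rfl

/-! ### Triangle-walk counting -/

noncomputable def walksA (p : ℤ × ℤ × ℤ) (n : ℕ) : Finset (Fin n → ℤ × ℤ × ℤ) :=
  (Fintype.piFinset fun _ : Fin n => OmegaA).filter
    (fun s => ∀ i ≤ n, nonneg3 (p + sumLt s i))

lemma mem_walksA {p : ℤ × ℤ × ℤ} {n : ℕ} {s : Fin n → ℤ × ℤ × ℤ} :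
    s ∈ walksA p n ↔ (∀ j, s j ∈ OmegaA) ∧ ∀ i ≤ n, nonneg3 (p + sumLt s i) := by
  simp [walksA, Fintype.mem_piFinset]

lemma triWalks_filter (p : ℤ × ℤ × ℤ) (n : ℕ) :
    (triWalks p n).filter (fun s => ∀ j, s j ∈ OmegaA) = walksA p n := by
  ext s
  simp only [Finset.mem_filter, triWalks, Fintype.mem_piFinset, mem_walksA, triPos_eq]
  constructor
  · rintro ⟨hm, h3⟩; exact ⟨h3, (Finset.mem_filter.mp hm).2⟩
  · rintro ⟨h1, h2⟩
    exact ⟨Finset.mem_filter.mpr ⟨Fintype.mem_piFinset.mpr fun j => Finset.mem_union_left _ (h1 j), h2⟩, h1⟩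

noncomputable def F : ℕ → ℤ × ℤ × ℤ → ℕ
  | 0, p => if nonneg3 p then 1 else 0
  | n+1, p => if nonneg3 p then
      F n (p + (1,0,-1)) + F n (p + (-1,1,0)) + F n (p + (0,-1,1)) else 0

lemma F_of_not {n : ℕ} {p : ℤ × ℤ × ℤ} (hp : ¬ nonneg3 p) : F n p = 0 := by
  cases n <;> simp [F, hp]

lemma walksA_empty {p : ℤ × ℤ × ℤ} {n : ℕ} (hp : ¬ nonneg3 p) : walksA p n = ∅ := by
  rw [Finset.eq_empty_iff_forall_notMem]
  intro s hs
  have h := (mem_walksA.mp hs).2 0 (Nat.zero_le _)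
  rw [sumLt_zero, add_zero] at h
  exact hp h

lemma card_walksA_zero (p : ℤ × ℤ × ℤ) : (walksA p 0).card = F 0 p := by
  by_cases hp : nonneg3 p
  · have h : walksA p 0 = Fintype.piFinset fun _ : Fin 0 => OmegaA := by
      unfold walksA
      apply Finset.filter_true_of_mem
      intro s _ i hi
      obtain rfl : i = 0 := Nat.le_zero.mp hi
      rw [sumLt_zero, add_zero]
      exact hp
    rw [h, Fintype.card_piFinset]
    simp [F, hp]
  · rw [walksA_empty hp]
    simp [F, hp]

lemma card_walksA_fiber (p d : ℤ × ℤ × ℤ) (n : ℕ) (hp : nonneg3 p) (hd : d ∈ OmegaA) :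
    ((walksA p (n+1)).filter fun s => s 0 = d).card = (walksA (p + d) n).card := by
  apply Finset.card_nbij' (i := fun s => Fin.tail s) (j := fun t => Fin.cons d t)
  · intro s hs
    rw [Finset.mem_coe, Finset.mem_filter] at hs
    obtain ⟨hs, h0⟩ := hs
    rw [mem_walksA] at hs; rw [Finset.mem_coe, mem_walksA]
    refine ⟨fun j => hs.1 j.succ, fun i hi => ?_⟩
    have h := hs.2 (i+1) (by omega)
    rw [sumLt_tail, h0, ← add_assoc] at h
    exact h
  · intro t ht
    rw [Finset.mem_coe, mem_walksA] at ht
    rw [Finset.mem_coe, Finset.mem_filter, mem_walksA]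
    refine ⟨⟨fun j => ?_, fun i hi => ?_⟩, by simp⟩
    · refine Fin.cases ?_ (fun i => ?_) j
      · simpa using hd
      · simpa using ht.1 i
    · cases i with
      | zero => rw [sumLt_zero, add_zero]; exact hp
      | succ i =>
        rw [sumLt_cons, ← add_assoc]
        exact ht.2 i (by omega)
  · intro s hs
    rw [Finset.mem_coe, Finset.mem_filter] at hs
    rw [← hs.2]
    exact Fin.cons_self_tail s
  · intro t _
    exact Fin.tail_cons (α := fun _ => ℤ × ℤ × ℤ) d t

lemma card_walksA_succ (p : ℤ × ℤ × ℤ) (n : ℕ) (hp : nonneg3 p) :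
    (walksA p (n+1)).card
      = (walksA (p + (1,0,-1)) n).card + (walksA (p + (-1,1,0)) n).card
        + (walksA (p + (0,-1,1)) n).card := by
  rw [Finset.card_eq_sum_card_fiberwise
        (f := fun s => s 0) (t := OmegaA) (fun s hs => (mem_walksA.mp hs).1 0)]
  have hexp : ∀ g : ℤ × ℤ × ℤ → ℕ,
      ∑ b ∈ OmegaA, g b = g (1,0,-1) + g (-1,1,0) + g (0,-1,1) := by
    intro g
    show ∑ b ∈ ({(1,0,-1), (-1,1,0), (0,-1,1)} : Finset (ℤ × ℤ × ℤ)), g b = _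
    rw [Finset.sum_insert (by decide), Finset.sum_insert (by decide),
        Finset.sum_singleton, ← add_assoc]
  rw [hexp, card_walksA_fiber p _ n hp (by decide), card_walksA_fiber p _ n hp (by decide),
      card_walksA_fiber p _ n hp (by decide)]

lemma card_walksA (n : ℕ) (p : ℤ × ℤ × ℤ) : (walksA p n).card = F n p := by
  induction n generalizing p with
  | zero => exact card_walksA_zero p
  | succ n ih =>
    by_cases hp : nonneg3 p
    · rw [card_walksA_succ p n hp, ih, ih, ih]
      simp [F, hp]
    · rw [walksA_empty hp]
      simp [F, hp]

end CornerAux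

namespace CornerAux

/-! ### Motzkin-path counting -/

def Dset : Finset ℤ := {-1, 0, 1}

noncomputable def motzSet (H : ℕ) (a : ℤ) (n : ℕ) : Finset (Fin n → ℤ) :=
  (Fintype.piFinset fun _ : Fin n => Dset).filter fun d =>
    (∀ i ≤ n, 0 ≤ a + sumLt d i ∧ a + sumLt d i ≤ (H : ℤ)) ∧ a + sumLt d n = 0 ∧
      ∀ j : Fin n, ¬(a + sumLt d (j : ℕ) = (H : ℤ) ∧ d j = 0)

lemma mem_motzSet {H : ℕ} {a : ℤ} {n : ℕ} {d : Fin n → ℤ} :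
    d ∈ motzSet H a n ↔ (∀ j, d j ∈ Dset) ∧
      (∀ i ≤ n, 0 ≤ a + sumLt d i ∧ a + sumLt d i ≤ (H : ℤ)) ∧ a + sumLt d n = 0 ∧
      ∀ j : Fin n, ¬(a + sumLt d (j : ℕ) = (H : ℤ) ∧ d j = 0) := by
  simp only [motzSet, Finset.mem_filter, Fintype.mem_piFinset]

noncomputable def G (H : ℕ) : ℕ → ℤ → ℕ
  | 0, a => if a = 0 then 1 else 0
  | n+1, a => if 0 ≤ a ∧ a ≤ (H : ℤ) then
      G H n (a-1) + G H n (a+1) + (if a = (H : ℤ) then 0 else G H n a) else 0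

lemma G_out (H : ℕ) : ∀ (n : ℕ) (a : ℤ), (a < 0 ∨ (H : ℤ) < a) → G H n a = 0
  | 0, a, h => by
    have : ¬ a = 0 := by omega
    simp [G, this]
  | n+1, a, h => by
    have : ¬ (0 ≤ a ∧ a ≤ (H : ℤ)) := by omega
    simp [G, this]

lemma motzSet_out {H : ℕ} {a : ℤ} {n : ℕ} (h : ¬ (0 ≤ a ∧ a ≤ (H : ℤ))) :
    motzSet H a n = ∅ := by
  rw [Finset.eq_empty_iff_forall_notMem]
  intro d hd
  have hb := (mem_motzSet.mp hd).2.1 0 (Nat.zero_le _)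
  rw [sumLt_zero, add_zero] at hb
  exact h hb

lemma card_motzSet_zero (H : ℕ) (a : ℤ) : (motzSet H a 0).card = G H 0 a := by
  by_cases ha : a = 0
  · subst ha
    have h : motzSet H 0 0 = Fintype.piFinset fun _ : Fin 0 => Dset := by
      unfold motzSet
      apply Finset.filter_true_of_mem
      intro d _
      refine ⟨fun i hi => ?_, by rw [sumLt_zero, add_zero], fun j => j.elim0⟩
      obtain rfl : i = 0 := Nat.le_zero.mp hi
      rw [sumLt_zero, add_zero]
      exact ⟨le_refl 0, Int.natCast_nonneg H⟩
    rw [h, Fintype.card_piFinset]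
    simp [G]
  · have h : motzSet H a 0 = ∅ := by
      rw [Finset.eq_empty_iff_forall_notMem]
      intro d hd
      have he := (mem_motzSet.mp hd).2.2.1
      rw [sumLt_zero, add_zero] at he
      exact ha he
    rw [h]
    simp [G, ha]

lemma card_motzSet_fiber (H : ℕ) (a b : ℤ) (n : ℕ) (ha : 0 ≤ a) (ha' : a ≤ (H : ℤ))
    (hb : b ∈ Dset) (hab : ¬(a = (H : ℤ) ∧ b = 0)) :
    ((motzSet H a (n+1)).filter fun d => d 0 = b).card = (motzSet H (a+b) n).card := by
  apply Finset.card_nbij' (i := fun d => Fin.tail d) (j := fun t => Fin.cons b t)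
  · intro s hs
    rw [Finset.mem_coe, Finset.mem_filter] at hs
    obtain ⟨hs, h0⟩ := hs
    rw [mem_motzSet] at hs; rw [Finset.mem_coe, mem_motzSet]
    obtain ⟨hpi, hbd, hend, hnl⟩ := hs
    refine ⟨fun j => hpi j.succ, fun i hi => ?_, ?_, fun j => ?_⟩
    · have h := hbd (i+1) (by omega)
      rw [sumLt_tail, h0, ← add_assoc] at h
      exact h
    · have h := hend
      rw [sumLt_tail, h0, ← add_assoc] at h
      exact h
    · have h := hnl j.succ
      rw [Fin.val_succ, sumLt_tail, h0, ← add_assoc] at h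
      simpa [Fin.tail] using h
  · intro t ht
    rw [Finset.mem_coe, mem_motzSet] at ht
    obtain ⟨hpi, hbd, hend, hnl⟩ := ht
    rw [Finset.mem_coe, Finset.mem_filter, mem_motzSet]
    refine ⟨⟨fun j => ?_, fun i hi => ?_, ?_, fun j => ?_⟩, by simp⟩
    · refine Fin.cases ?_ (fun i => ?_) j
      · simpa using hb
      · simpa using hpi i
    · cases i with
      | zero => rw [sumLt_zero, add_zero]; exact ⟨ha, ha'⟩
      | succ i =>
        rw [sumLt_cons, ← add_assoc]
        exact hbd i (by omega)
    · rw [sumLt_cons, ← add_assoc]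
      exact hend
    · refine Fin.cases ?_ (fun i => ?_) j
      · rw [Fin.val_zero, sumLt_zero, add_zero]
        intro hc
        exact hab ⟨hc.1, by simpa using hc.2⟩
      · rw [Fin.val_succ, sumLt_cons, ← add_assoc]
        intro hc
        exact hnl i ⟨by linarith [hc.1], by simpa using hc.2⟩
  · intro s hs
    rw [Finset.mem_coe, Finset.mem_filter] at hs
    rw [← hs.2]
    exact Fin.cons_self_tail s
  · intro t _
    exact Fin.tail_cons (α := fun _ => ℤ) b t

lemma card_motzSet_fiber_top (H : ℕ) (n : ℕ) :
    ((motzSet H ((H : ℤ)) (n+1)).filter fun d => d 0 = 0) = ∅ := by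
  rw [Finset.eq_empty_iff_forall_notMem]
  intro d hd
  rw [Finset.mem_filter] at hd
  obtain ⟨hd, h0⟩ := hd
  have hnl := (mem_motzSet.mp hd).2.2.2 0
  rw [Fin.val_zero, sumLt_zero, add_zero] at hnl
  exact hnl ⟨rfl, h0⟩

lemma card_motzSet_succ (H : ℕ) (a : ℤ) (n : ℕ) :
    (motzSet H a (n+1)).card = if 0 ≤ a ∧ a ≤ (H : ℤ) then
      (motzSet H (a-1) n).card + (motzSet H (a+1) n).card
        + (if a = (H : ℤ) then 0 else (motzSet H a n).card) else 0 := by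
  by_cases ha : 0 ≤ a ∧ a ≤ (H : ℤ)
  · rw [if_pos ha]
    rw [Finset.card_eq_sum_card_fiberwise
          (f := fun d => d 0) (t := Dset) (fun d hd => (mem_motzSet.mp hd).1 0)]
    have hexp : ∀ g : ℤ → ℕ, ∑ b ∈ Dset, g b = g (-1) + g 0 + g 1 := by
      intro g
      show ∑ b ∈ ({-1, 0, 1} : Finset ℤ), g b = _
      rw [Finset.sum_insert (by decide), Finset.sum_insert (by decide),
          Finset.sum_singleton, ← add_assoc]
    rw [hexp]
    have e1 : ((motzSet H a (n+1)).filter fun d => d 0 = -1).card = (motzSet H (a-1) n).card := by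
      rw [card_motzSet_fiber H a (-1) n ha.1 ha.2 (by decide) (by simp)]
      have e : a + -1 = a - 1 := by ring
      rw [e]
    have e2 : ((motzSet H a (n+1)).filter fun d => d 0 = 1).card = (motzSet H (a+1) n).card := by
      rw [card_motzSet_fiber H a 1 n ha.1 ha.2 (by decide) (by simp)]
    have e3 : ((motzSet H a (n+1)).filter fun d => d 0 = 0).card
        = if a = (H : ℤ) then 0 else (motzSet H a n).card := by
      by_cases haH : a = (H : ℤ)
      · subst haH
        rw [card_motzSet_fiber_top, if_pos rfl, Finset.card_empty]
      · rw [card_motzSet_fiber H a 0 n ha.1 ha.2 (by decide) (by tauto), if_neg haH, add_zero]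
    rw [e1, e2, e3]
    ring
  · rw [if_neg ha, motzSet_out ha, Finset.card_empty]

lemma card_motzSet (H : ℕ) (n : ℕ) (a : ℤ) : (motzSet H a n).card = G H n a := by
  induction n generalizing a with
  | zero => exact card_motzSet_zero H a
  | succ n ih =>
    rw [card_motzSet_succ, ih, ih, ih]
    rfl

end CornerAux

namespace CornerAux

/-! ### Motzkin paths as step sequences -/

def pathSteps {n : ℕ} (h : Fin (n+1) → ℤ) : Fin n → ℤ :=
  fun j => h j.succ - h j.castSucc

lemma telescope {n : ℕ} (h : Fin (n+1) → ℤ) (i : Fin (n+1)) :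
    h i = h 0 + sumLt (pathSteps h) (i : ℕ) := by
  induction i using Fin.induction with
  | zero => simp [sumLt_zero]
  | succ i ih =>
    rw [Fin.val_succ, sumLt_succ _ _ i.isLt]
    have hc : (i.castSucc : ℕ) = (i : ℕ) := Fin.coe_castSucc i
    rw [hc] at ih
    have he : (⟨(i : ℕ), i.isLt⟩ : Fin n) = i := rfl
    rw [he]
    have hps : pathSteps h i = h i.succ - h i.castSucc := rfl
    rw [hps]
    omega

noncomputable def motzEquiv (H n : ℕ) :
    {h : Fin (n + 1) → ℤ // IsMotzkin H n h ∧ NoLevelAtTop H n h}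
      ≃ {d : Fin n → ℤ // d ∈ motzSet H 0 n} where
  toFun := fun x => ⟨pathSteps x.1, by
    obtain ⟨⟨h0, hlast, hbd, hstep⟩, hnl⟩ := x.2
    rw [mem_motzSet]
    refine ⟨fun j => ?_, fun i hi => ?_, ?_, fun j => ?_⟩
    · have := hstep j
      simp only [Set.mem_insert_iff, Set.mem_singleton_iff] at this
      show pathSteps x.1 j ∈ ({-1, 0, 1} : Finset ℤ)
      simp only [Finset.mem_insert, Finset.mem_singleton]
      exact this
    · have ht := telescope x.1 ⟨i, Nat.lt_succ_of_le hi⟩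
      rw [h0, zero_add] at ht
      have hb := hbd ⟨i, Nat.lt_succ_of_le hi⟩
      rw [ht] at hb
      constructor
      · linarith [hb.1]
      · linarith [hb.2]
    · have ht := telescope x.1 (Fin.last n)
      rw [h0, zero_add, hlast] at ht
      have : ((Fin.last n : Fin (n+1)) : ℕ) = n := rfl
      rw [this] at ht
      omega
    · intro hc
      obtain ⟨hc1, hc2⟩ := hc
      have ht1 := telescope x.1 j.castSucc
      have ht2 := telescope x.1 j.succ
      rw [h0, zero_add] at ht1 ht2
      have hcv : (j.castSucc : ℕ) = (j : ℕ) := Fin.coe_castSucc j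
      rw [hcv] at ht1
      have hsv : (j.succ : ℕ) = (j : ℕ) + 1 := Fin.val_succ j
      rw [hsv, sumLt_succ _ _ j.isLt] at ht2
      have he : (⟨(j : ℕ), j.isLt⟩ : Fin n) = j := rfl
      rw [he] at ht2
      refine hnl j ⟨?_, ?_⟩
      · rw [ht1]; omega
      · rw [ht2, hc2]; omega⟩
  invFun := fun y => ⟨fun i => sumLt y.1 (i : ℕ), by
    obtain ⟨hpi, hbd, hend, hnl⟩ := mem_motzSet.mp y.2
    constructor
    · refine ⟨?_, ?_, fun i => ?_, fun j => ?_⟩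
      · show sumLt y.1 (((0 : Fin (n+1))) : ℕ) = 0
        rw [Fin.val_zero, sumLt_zero]
      · show sumLt y.1 ((Fin.last n : Fin (n+1)) : ℕ) = 0
        have hl : ((Fin.last n : Fin (n+1)) : ℕ) = n := rfl
        rw [hl]
        omega
      · show 0 ≤ sumLt y.1 (i : ℕ) ∧ sumLt y.1 (i : ℕ) ≤ (H : ℤ)
        have hb := hbd (i : ℕ) (by omega)
        constructor
        · linarith [hb.1]
        · linarith [hb.2]
      · show sumLt y.1 ((j.succ : ℕ)) - sumLt y.1 ((j.castSucc : ℕ)) ∈ ({-1,0,1} : Set ℤ)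
        have hcv : (j.castSucc : ℕ) = (j : ℕ) := Fin.coe_castSucc j
        have hsv : (j.succ : ℕ) = (j : ℕ) + 1 := Fin.val_succ j
        rw [hcv, hsv, sumLt_succ _ _ j.isLt]
        have he : (⟨(j : ℕ), j.isLt⟩ : Fin n) = j := rfl
        rw [he]
        have := hpi j
        simp only [Dset, Finset.mem_insert, Finset.mem_singleton] at this
        simp only [Set.mem_insert_iff, Set.mem_singleton_iff]
        omega
    · intro j hc
      have hc1 : sumLt y.1 ((j.castSucc : ℕ)) = (H : ℤ) := hc.1
      have hc2 : sumLt y.1 ((j.succ : ℕ)) = (H : ℤ) := hc.2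
      have hcv : (j.castSucc : ℕ) = (j : ℕ) := Fin.coe_castSucc j
      have hsv : (j.succ : ℕ) = (j : ℕ) + 1 := Fin.val_succ j
      rw [hcv] at hc1
      rw [hsv, sumLt_succ _ _ j.isLt] at hc2
      have he : (⟨(j : ℕ), j.isLt⟩ : Fin n) = j := rfl
      rw [he] at hc2
      refine hnl j ⟨by omega, by omega⟩⟩
  left_inv := fun x => by
    apply Subtype.ext
    funext i
    have ht := telescope x.1 i
    rw [x.2.1.1, zero_add] at ht
    exact ht.symm
  right_inv := fun y => by
    apply Subtype.ext
    funext j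
    show pathSteps (fun i : Fin (n+1) => sumLt y.1 (i : ℕ)) j = y.1 j
    unfold pathSteps
    beta_reduce
    have hcv : (j.castSucc : ℕ) = (j : ℕ) := Fin.coe_castSucc j
    have hsv : (j.succ : ℕ) = (j : ℕ) + 1 := Fin.val_succ j
    rw [hcv, hsv, sumLt_succ _ _ j.isLt]
    have he : (⟨(j : ℕ), j.isLt⟩ : Fin n) = j := rfl
    rw [he]
    ring

lemma natCard_motzkin (H n : ℕ) :
    Nat.card {h : Fin (n + 1) → ℤ // IsMotzkin H n h ∧ NoLevelAtTop H n h} = G H n 0 := by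
  rw [Nat.card_congr (motzEquiv H n)]
  have : Nat.card {d : Fin n → ℤ // d ∈ motzSet H 0 n} = (motzSet H 0 n).card :=
    Nat.card_eq_finsetCard _
  rw [this, card_motzSet]

end CornerAux

namespace CornerAux

/-! ### The intertwining kernel -/

def Lf (a : ℤ) (p : ℤ × ℤ × ℤ) : ℤ :=
  max 0 (min a p.2.1 - max 0 (a - p.2.2) + 1 - max 0 (a - p.1))

lemma Lf_neg {a : ℤ} {p : ℤ × ℤ × ℤ} (ha : a < 0) (hv : 0 ≤ p.2.1) : Lf a p = 0 := by
  unfold Lf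
  omega

set_option maxHeartbeats 1000000 in
theorem Lf_id (H : ℕ) (a u v w : ℤ) (hu : 0 ≤ u) (hv0 : 0 ≤ v) (hw : 0 ≤ w)
    (hsum : u + v + w = 2*(H:ℤ)) (ha : 0 ≤ a) (haH : a ≤ (H:ℤ)) :
    (if 1 ≤ w then Lf a (u+1,v,w-1) else 0) + (if 1 ≤ u then Lf a (u-1,v+1,w) else 0)
      + (if 1 ≤ v then Lf a (u,v-1,w+1) else 0)
      = Lf (a-1) (u,v,w) + (if a = (H:ℤ) then 0 else Lf a (u,v,w) + Lf (a+1) (u,v,w)) := by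
  unfold Lf
  dsimp only
  rcases lt_trichotomy (a - v) 0 with hv | hv | hv <;>
    rcases lt_trichotomy (a - w) 0 with hw2 | hw2 | hw2 <;>
      rcases lt_trichotomy (a - u) 0 with hu2 | hu2 | hu2
  · rw [show min a v = a from by omega, show min a (v + 1) = a from by omega, show min a (v - 1) = a from by omega, show min (a - 1) v = a - 1 from by omega, show min (a + 1) v = a + 1 from by omega]
    rw [show max 0 (a - (w - 1)) = 0 from by omega, show max 0 (a - w) = 0 from by omega, show max 0 (a - (w + 1)) = 0 from by omega, show max 0 (a - 1 - w) = 0 from by omega, show max 0 (a + 1 - w) = 0 from by omega]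
    rw [show max 0 (a - (u + 1)) = 0 from by omega, show max 0 (a - (u - 1)) = 0 from by omega, show max 0 (a - u) = 0 from by omega, show max 0 (a - 1 - u) = 0 from by omega, show max 0 (a + 1 - u) = 0 from by omega]
    split_ifs <;> omega
  · rw [show min a v = a from by omega, show min a (v + 1) = a from by omega, show min a (v - 1) = a from by omega, show min (a - 1) v = a - 1 from by omega, show min (a + 1) v = a + 1 from by omega]
    rw [show max 0 (a - (w - 1)) = 0 from by omega, show max 0 (a - w) = 0 from by omega, show max 0 (a - (w + 1)) = 0 from by omega, show max 0 (a - 1 - w) = 0 from by omega, show max 0 (a + 1 - w) = 0 from by omega]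
    rw [show max 0 (a - (u + 1)) = 0 from by omega, show max 0 (a - (u - 1)) = 1 from by omega, show max 0 (a - u) = 0 from by omega, show max 0 (a - 1 - u) = 0 from by omega, show max 0 (a + 1 - u) = 1 from by omega]
    split_ifs <;> omega
  · rw [show min a v = a from by omega, show min a (v + 1) = a from by omega, show min a (v - 1) = a from by omega, show min (a - 1) v = a - 1 from by omega, show min (a + 1) v = a + 1 from by omega]
    rw [show max 0 (a - (w - 1)) = 0 from by omega, show max 0 (a - w) = 0 from by omega, show max 0 (a - (w + 1)) = 0 from by omega, show max 0 (a - 1 - w) = 0 from by omega, show max 0 (a + 1 - w) = 0 from by omega]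
    rw [show max 0 (a - (u + 1)) = a - (u + 1) from by omega, show max 0 (a - (u - 1)) = a - (u - 1) from by omega, show max 0 (a - u) = a - u from by omega, show max 0 (a - 1 - u) = a - 1 - u from by omega, show max 0 (a + 1 - u) = a + 1 - u from by omega]
    split_ifs <;> omega
  · rw [show min a v = a from by omega, show min a (v + 1) = a from by omega, show min a (v - 1) = a from by omega, show min (a - 1) v = a - 1 from by omega, show min (a + 1) v = a + 1 from by omega]
    rw [show max 0 (a - (w - 1)) = 1 from by omega, show max 0 (a - w) = 0 from by omega, show max 0 (a - (w + 1)) = 0 from by omega, show max 0 (a - 1 - w) = 0 from by omega, show max 0 (a + 1 - w) = 1 from by omega]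
    rw [show max 0 (a - (u + 1)) = 0 from by omega, show max 0 (a - (u - 1)) = 0 from by omega, show max 0 (a - u) = 0 from by omega, show max 0 (a - 1 - u) = 0 from by omega, show max 0 (a + 1 - u) = 0 from by omega]
    split_ifs <;> omega
  · rw [show min a v = a from by omega, show min a (v + 1) = a from by omega, show min a (v - 1) = a from by omega, show min (a - 1) v = a - 1 from by omega, show min (a + 1) v = a + 1 from by omega]
    rw [show max 0 (a - (w - 1)) = 1 from by omega, show max 0 (a - w) = 0 from by omega, show max 0 (a - (w + 1)) = 0 from by omega, show max 0 (a - 1 - w) = 0 from by omega, show max 0 (a + 1 - w) = 1 from by omega]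
    rw [show max 0 (a - (u + 1)) = 0 from by omega, show max 0 (a - (u - 1)) = 1 from by omega, show max 0 (a - u) = 0 from by omega, show max 0 (a - 1 - u) = 0 from by omega, show max 0 (a + 1 - u) = 1 from by omega]
    split_ifs <;> omega
  · rw [show min a v = a from by omega, show min a (v + 1) = a from by omega, show min a (v - 1) = a from by omega, show min (a - 1) v = a - 1 from by omega, show min (a + 1) v = a + 1 from by omega]
    rw [show max 0 (a - (w - 1)) = 1 from by omega, show max 0 (a - w) = 0 from by omega, show max 0 (a - (w + 1)) = 0 from by omega, show max 0 (a - 1 - w) = 0 from by omega, show max 0 (a + 1 - w) = 1 from by omega]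
    rw [show max 0 (a - (u + 1)) = a - (u + 1) from by omega, show max 0 (a - (u - 1)) = a - (u - 1) from by omega, show max 0 (a - u) = a - u from by omega, show max 0 (a - 1 - u) = a - 1 - u from by omega, show max 0 (a + 1 - u) = a + 1 - u from by omega]
    split_ifs <;> omega
  · rw [show min a v = a from by omega, show min a (v + 1) = a from by omega, show min a (v - 1) = a from by omega, show min (a - 1) v = a - 1 from by omega, show min (a + 1) v = a + 1 from by omega]
    rw [show max 0 (a - (w - 1)) = a - (w - 1) from by omega, show max 0 (a - w) = a - w from by omega, show max 0 (a - (w + 1)) = a - (w + 1) from by omega, show max 0 (a - 1 - w) = a - 1 - w from by omega, show max 0 (a + 1 - w) = a + 1 - w from by omega]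
    rw [show max 0 (a - (u + 1)) = 0 from by omega, show max 0 (a - (u - 1)) = 0 from by omega, show max 0 (a - u) = 0 from by omega, show max 0 (a - 1 - u) = 0 from by omega, show max 0 (a + 1 - u) = 0 from by omega]
    split_ifs <;> omega
  · rw [show min a v = a from by omega, show min a (v + 1) = a from by omega, show min a (v - 1) = a from by omega, show min (a - 1) v = a - 1 from by omega, show min (a + 1) v = a + 1 from by omega]
    rw [show max 0 (a - (w - 1)) = a - (w - 1) from by omega, show max 0 (a - w) = a - w from by omega, show max 0 (a - (w + 1)) = a - (w + 1) from by omega, show max 0 (a - 1 - w) = a - 1 - w from by omega, show max 0 (a + 1 - w) = a + 1 - w from by omega]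
    rw [show max 0 (a - (u + 1)) = 0 from by omega, show max 0 (a - (u - 1)) = 1 from by omega, show max 0 (a - u) = 0 from by omega, show max 0 (a - 1 - u) = 0 from by omega, show max 0 (a + 1 - u) = 1 from by omega]
    split_ifs <;> omega
  · rw [show min a v = a from by omega, show min a (v + 1) = a from by omega, show min a (v - 1) = a from by omega, show min (a - 1) v = a - 1 from by omega, show min (a + 1) v = a + 1 from by omega]
    rw [show max 0 (a - (w - 1)) = a - (w - 1) from by omega, show max 0 (a - w) = a - w from by omega, show max 0 (a - (w + 1)) = a - (w + 1) from by omega, show max 0 (a - 1 - w) = a - 1 - w from by omega, show max 0 (a + 1 - w) = a + 1 - w from by omega]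
    rw [show max 0 (a - (u + 1)) = a - (u + 1) from by omega, show max 0 (a - (u - 1)) = a - (u - 1) from by omega, show max 0 (a - u) = a - u from by omega, show max 0 (a - 1 - u) = a - 1 - u from by omega, show max 0 (a + 1 - u) = a + 1 - u from by omega]
    split_ifs <;> omega
  · rw [show min a v = a from by omega, show min a (v + 1) = a from by omega, show min a (v - 1) = a - 1 from by omega, show min (a - 1) v = a - 1 from by omega, show min (a + 1) v = a from by omega]
    rw [show max 0 (a - (w - 1)) = 0 from by omega, show max 0 (a - w) = 0 from by omega, show max 0 (a - (w + 1)) = 0 from by omega, show max 0 (a - 1 - w) = 0 from by omega, show max 0 (a + 1 - w) = 0 from by omega]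
    rw [show max 0 (a - (u + 1)) = 0 from by omega, show max 0 (a - (u - 1)) = 0 from by omega, show max 0 (a - u) = 0 from by omega, show max 0 (a - 1 - u) = 0 from by omega, show max 0 (a + 1 - u) = 0 from by omega]
    split_ifs <;> omega
  · rw [show min a v = a from by omega, show min a (v + 1) = a from by omega, show min a (v - 1) = a - 1 from by omega, show min (a - 1) v = a - 1 from by omega, show min (a + 1) v = a from by omega]
    rw [show max 0 (a - (w - 1)) = 0 from by omega, show max 0 (a - w) = 0 from by omega, show max 0 (a - (w + 1)) = 0 from by omega, show max 0 (a - 1 - w) = 0 from by omega, show max 0 (a + 1 - w) = 0 from by omega]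
    rw [show max 0 (a - (u + 1)) = 0 from by omega, show max 0 (a - (u - 1)) = 1 from by omega, show max 0 (a - u) = 0 from by omega, show max 0 (a - 1 - u) = 0 from by omega, show max 0 (a + 1 - u) = 1 from by omega]
    split_ifs <;> omega
  · rw [show min a v = a from by omega, show min a (v + 1) = a from by omega, show min a (v - 1) = a - 1 from by omega, show min (a - 1) v = a - 1 from by omega, show min (a + 1) v = a from by omega]
    rw [show max 0 (a - (w - 1)) = 0 from by omega, show max 0 (a - w) = 0 from by omega, show max 0 (a - (w + 1)) = 0 from by omega, show max 0 (a - 1 - w) = 0 from by omega, show max 0 (a + 1 - w) = 0 from by omega]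
    rw [show max 0 (a - (u + 1)) = a - (u + 1) from by omega, show max 0 (a - (u - 1)) = a - (u - 1) from by omega, show max 0 (a - u) = a - u from by omega, show max 0 (a - 1 - u) = a - 1 - u from by omega, show max 0 (a + 1 - u) = a + 1 - u from by omega]
    split_ifs <;> omega
  · rw [show min a v = a from by omega, show min a (v + 1) = a from by omega, show min a (v - 1) = a - 1 from by omega, show min (a - 1) v = a - 1 from by omega, show min (a + 1) v = a from by omega]
    rw [show max 0 (a - (w - 1)) = 1 from by omega, show max 0 (a - w) = 0 from by omega, show max 0 (a - (w + 1)) = 0 from by omega, show max 0 (a - 1 - w) = 0 from by omega, show max 0 (a + 1 - w) = 1 from by omega]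
    rw [show max 0 (a - (u + 1)) = 0 from by omega, show max 0 (a - (u - 1)) = 0 from by omega, show max 0 (a - u) = 0 from by omega, show max 0 (a - 1 - u) = 0 from by omega, show max 0 (a + 1 - u) = 0 from by omega]
    split_ifs <;> omega
  · rw [show min a v = a from by omega, show min a (v + 1) = a from by omega, show min a (v - 1) = a - 1 from by omega, show min (a - 1) v = a - 1 from by omega, show min (a + 1) v = a from by omega]
    rw [show max 0 (a - (w - 1)) = 1 from by omega, show max 0 (a - w) = 0 from by omega, show max 0 (a - (w + 1)) = 0 from by omega, show max 0 (a - 1 - w) = 0 from by omega, show max 0 (a + 1 - w) = 1 from by omega]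
    rw [show max 0 (a - (u + 1)) = 0 from by omega, show max 0 (a - (u - 1)) = 1 from by omega, show max 0 (a - u) = 0 from by omega, show max 0 (a - 1 - u) = 0 from by omega, show max 0 (a + 1 - u) = 1 from by omega]
    split_ifs <;> omega
  · rw [show min a v = a from by omega, show min a (v + 1) = a from by omega, show min a (v - 1) = a - 1 from by omega, show min (a - 1) v = a - 1 from by omega, show min (a + 1) v = a from by omega]
    rw [show max 0 (a - (w - 1)) = 1 from by omega, show max 0 (a - w) = 0 from by omega, show max 0 (a - (w + 1)) = 0 from by omega, show max 0 (a - 1 - w) = 0 from by omega, show max 0 (a + 1 - w) = 1 from by omega]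
    rw [show max 0 (a - (u + 1)) = a - (u + 1) from by omega, show max 0 (a - (u - 1)) = a - (u - 1) from by omega, show max 0 (a - u) = a - u from by omega, show max 0 (a - 1 - u) = a - 1 - u from by omega, show max 0 (a + 1 - u) = a + 1 - u from by omega]
    split_ifs <;> omega
  · rw [show min a v = a from by omega, show min a (v + 1) = a from by omega, show min a (v - 1) = a - 1 from by omega, show min (a - 1) v = a - 1 from by omega, show min (a + 1) v = a from by omega]
    rw [show max 0 (a - (w - 1)) = a - (w - 1) from by omega, show max 0 (a - w) = a - w from by omega, show max 0 (a - (w + 1)) = a - (w + 1) from by omega, show max 0 (a - 1 - w) = a - 1 - w from by omega, show max 0 (a + 1 - w) = a + 1 - w from by omega]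
    rw [show max 0 (a - (u + 1)) = 0 from by omega, show max 0 (a - (u - 1)) = 0 from by omega, show max 0 (a - u) = 0 from by omega, show max 0 (a - 1 - u) = 0 from by omega, show max 0 (a + 1 - u) = 0 from by omega]
    split_ifs <;> omega
  · rw [show min a v = a from by omega, show min a (v + 1) = a from by omega, show min a (v - 1) = a - 1 from by omega, show min (a - 1) v = a - 1 from by omega, show min (a + 1) v = a from by omega]
    rw [show max 0 (a - (w - 1)) = a - (w - 1) from by omega, show max 0 (a - w) = a - w from by omega, show max 0 (a - (w + 1)) = a - (w + 1) from by omega, show max 0 (a - 1 - w) = a - 1 - w from by omega, show max 0 (a + 1 - w) = a + 1 - w from by omega]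
    rw [show max 0 (a - (u + 1)) = 0 from by omega, show max 0 (a - (u - 1)) = 1 from by omega, show max 0 (a - u) = 0 from by omega, show max 0 (a - 1 - u) = 0 from by omega, show max 0 (a + 1 - u) = 1 from by omega]
    split_ifs <;> omega
  · rw [show min a v = a from by omega, show min a (v + 1) = a from by omega, show min a (v - 1) = a - 1 from by omega, show min (a - 1) v = a - 1 from by omega, show min (a + 1) v = a from by omega]
    rw [show max 0 (a - (w - 1)) = a - (w - 1) from by omega, show max 0 (a - w) = a - w from by omega, show max 0 (a - (w + 1)) = a - (w + 1) from by omega, show max 0 (a - 1 - w) = a - 1 - w from by omega, show max 0 (a + 1 - w) = a + 1 - w from by omega]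
    rw [show max 0 (a - (u + 1)) = a - (u + 1) from by omega, show max 0 (a - (u - 1)) = a - (u - 1) from by omega, show max 0 (a - u) = a - u from by omega, show max 0 (a - 1 - u) = a - 1 - u from by omega, show max 0 (a + 1 - u) = a + 1 - u from by omega]
    split_ifs <;> omega
  · rw [show min a v = v from by omega, show min a (v + 1) = v + 1 from by omega, show min a (v - 1) = v - 1 from by omega, show min (a - 1) v = v from by omega, show min (a + 1) v = v from by omega]
    rw [show max 0 (a - (w - 1)) = 0 from by omega, show max 0 (a - w) = 0 from by omega, show max 0 (a - (w + 1)) = 0 from by omega, show max 0 (a - 1 - w) = 0 from by omega, show max 0 (a + 1 - w) = 0 from by omega]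
    rw [show max 0 (a - (u + 1)) = 0 from by omega, show max 0 (a - (u - 1)) = 0 from by omega, show max 0 (a - u) = 0 from by omega, show max 0 (a - 1 - u) = 0 from by omega, show max 0 (a + 1 - u) = 0 from by omega]
    split_ifs <;> omega
  · rw [show min a v = v from by omega, show min a (v + 1) = v + 1 from by omega, show min a (v - 1) = v - 1 from by omega, show min (a - 1) v = v from by omega, show min (a + 1) v = v from by omega]
    rw [show max 0 (a - (w - 1)) = 0 from by omega, show max 0 (a - w) = 0 from by omega, show max 0 (a - (w + 1)) = 0 from by omega, show max 0 (a - 1 - w) = 0 from by omega, show max 0 (a + 1 - w) = 0 from by omega]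
    rw [show max 0 (a - (u + 1)) = 0 from by omega, show max 0 (a - (u - 1)) = 1 from by omega, show max 0 (a - u) = 0 from by omega, show max 0 (a - 1 - u) = 0 from by omega, show max 0 (a + 1 - u) = 1 from by omega]
    split_ifs <;> omega
  · rw [show min a v = v from by omega, show min a (v + 1) = v + 1 from by omega, show min a (v - 1) = v - 1 from by omega, show min (a - 1) v = v from by omega, show min (a + 1) v = v from by omega]
    rw [show max 0 (a - (w - 1)) = 0 from by omega, show max 0 (a - w) = 0 from by omega, show max 0 (a - (w + 1)) = 0 from by omega, show max 0 (a - 1 - w) = 0 from by omega, show max 0 (a + 1 - w) = 0 from by omega]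
    rw [show max 0 (a - (u + 1)) = a - (u + 1) from by omega, show max 0 (a - (u - 1)) = a - (u - 1) from by omega, show max 0 (a - u) = a - u from by omega, show max 0 (a - 1 - u) = a - 1 - u from by omega, show max 0 (a + 1 - u) = a + 1 - u from by omega]
    split_ifs <;> omega
  · rw [show min a v = v from by omega, show min a (v + 1) = v + 1 from by omega, show min a (v - 1) = v - 1 from by omega, show min (a - 1) v = v from by omega, show min (a + 1) v = v from by omega]
    rw [show max 0 (a - (w - 1)) = 1 from by omega, show max 0 (a - w) = 0 from by omega, show max 0 (a - (w + 1)) = 0 from by omega, show max 0 (a - 1 - w) = 0 from by omega, show max 0 (a + 1 - w) = 1 from by omega]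
    rw [show max 0 (a - (u + 1)) = 0 from by omega, show max 0 (a - (u - 1)) = 0 from by omega, show max 0 (a - u) = 0 from by omega, show max 0 (a - 1 - u) = 0 from by omega, show max 0 (a + 1 - u) = 0 from by omega]
    split_ifs <;> omega
  · rw [show min a v = v from by omega, show min a (v + 1) = v + 1 from by omega, show min a (v - 1) = v - 1 from by omega, show min (a - 1) v = v from by omega, show min (a + 1) v = v from by omega]
    rw [show max 0 (a - (w - 1)) = 1 from by omega, show max 0 (a - w) = 0 from by omega, show max 0 (a - (w + 1)) = 0 from by omega, show max 0 (a - 1 - w) = 0 from by omega, show max 0 (a + 1 - w) = 1 from by omega]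
    rw [show max 0 (a - (u + 1)) = 0 from by omega, show max 0 (a - (u - 1)) = 1 from by omega, show max 0 (a - u) = 0 from by omega, show max 0 (a - 1 - u) = 0 from by omega, show max 0 (a + 1 - u) = 1 from by omega]
    split_ifs <;> omega
  · rw [show min a v = v from by omega, show min a (v + 1) = v + 1 from by omega, show min a (v - 1) = v - 1 from by omega, show min (a - 1) v = v from by omega, show min (a + 1) v = v from by omega]
    rw [show max 0 (a - (w - 1)) = 1 from by omega, show max 0 (a - w) = 0 from by omega, show max 0 (a - (w + 1)) = 0 from by omega, show max 0 (a - 1 - w) = 0 from by omega, show max 0 (a + 1 - w) = 1 from by omega]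
    rw [show max 0 (a - (u + 1)) = a - (u + 1) from by omega, show max 0 (a - (u - 1)) = a - (u - 1) from by omega, show max 0 (a - u) = a - u from by omega, show max 0 (a - 1 - u) = a - 1 - u from by omega, show max 0 (a + 1 - u) = a + 1 - u from by omega]
    split_ifs <;> omega
  · rw [show min a v = v from by omega, show min a (v + 1) = v + 1 from by omega, show min a (v - 1) = v - 1 from by omega, show min (a - 1) v = v from by omega, show min (a + 1) v = v from by omega]
    rw [show max 0 (a - (w - 1)) = a - (w - 1) from by omega, show max 0 (a - w) = a - w from by omega, show max 0 (a - (w + 1)) = a - (w + 1) from by omega, show max 0 (a - 1 - w) = a - 1 - w from by omega, show max 0 (a + 1 - w) = a + 1 - w from by omega]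
    rw [show max 0 (a - (u + 1)) = 0 from by omega, show max 0 (a - (u - 1)) = 0 from by omega, show max 0 (a - u) = 0 from by omega, show max 0 (a - 1 - u) = 0 from by omega, show max 0 (a + 1 - u) = 0 from by omega]
    split_ifs <;> omega
  · rw [show min a v = v from by omega, show min a (v + 1) = v + 1 from by omega, show min a (v - 1) = v - 1 from by omega, show min (a - 1) v = v from by omega, show min (a + 1) v = v from by omega]
    rw [show max 0 (a - (w - 1)) = a - (w - 1) from by omega, show max 0 (a - w) = a - w from by omega, show max 0 (a - (w + 1)) = a - (w + 1) from by omega, show max 0 (a - 1 - w) = a - 1 - w from by omega, show max 0 (a + 1 - w) = a + 1 - w from by omega]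
    rw [show max 0 (a - (u + 1)) = 0 from by omega, show max 0 (a - (u - 1)) = 1 from by omega, show max 0 (a - u) = 0 from by omega, show max 0 (a - 1 - u) = 0 from by omega, show max 0 (a + 1 - u) = 1 from by omega]
    split_ifs <;> omega
  · rw [show min a v = v from by omega, show min a (v + 1) = v + 1 from by omega, show min a (v - 1) = v - 1 from by omega, show min (a - 1) v = v from by omega, show min (a + 1) v = v from by omega]
    rw [show max 0 (a - (w - 1)) = a - (w - 1) from by omega, show max 0 (a - w) = a - w from by omega, show max 0 (a - (w + 1)) = a - (w + 1) from by omega, show max 0 (a - 1 - w) = a - 1 - w from by omega, show max 0 (a + 1 - w) = a + 1 - w from by omega]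
    rw [show max 0 (a - (u + 1)) = a - (u + 1) from by omega, show max 0 (a - (u - 1)) = a - (u - 1) from by omega, show max 0 (a - u) = a - u from by omega, show max 0 (a - 1 - u) = a - 1 - u from by omega, show max 0 (a + 1 - u) = a + 1 - u from by omega]
    split_ifs <;> omega

lemma sum_shift_up (H n : ℕ) (p : ℤ × ℤ × ℤ) (hv : 0 ≤ p.2.1) :
    ∑ a ∈ Finset.Icc (0:ℤ) (H:ℤ), Lf a p * (G H n (a+1) : ℤ)
      = ∑ a ∈ Finset.Icc (0:ℤ) (H:ℤ), Lf (a-1) p * (G H n a : ℤ) := by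
  have h1 : ∑ a ∈ Finset.Icc (0:ℤ) (H:ℤ), Lf (a-1) p * (G H n a : ℤ)
      = ∑ x ∈ Finset.Icc (-1 : ℤ) ((H:ℤ)-1), Lf x p * (G H n (x+1) : ℤ) := by
    have hm : (Finset.Icc (-1:ℤ) ((H:ℤ)-1))
        = (Finset.Icc (0:ℤ) (H:ℤ)).map (addRightEmbedding (-1)) := by
      rw [Finset.map_add_right_Icc]
      congr 1 <;> ring
    rw [hm, Finset.sum_map]
    refine Finset.sum_congr rfl fun a _ => ?_
    simp only [addRightEmbedding_apply]
    have e1 : a + (-1 : ℤ) = a - 1 := by ring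
    rw [e1]
    have e2 : a - 1 + 1 = a := by ring
    rw [e2]
  have h2 : ∑ x ∈ Finset.Icc (-1:ℤ) ((H:ℤ)-1), Lf x p * (G H n (x+1) : ℤ)
      = ∑ x ∈ Finset.Icc (-1:ℤ) (H:ℤ), Lf x p * (G H n (x+1) : ℤ) := by
    apply Finset.sum_subset (Finset.Icc_subset_Icc_right (by omega))
    intro x hx hnx
    have hxH : x = (H:ℤ) := by
      simp only [Finset.mem_Icc] at hx hnx
      omega
    subst hxH
    rw [G_out H n ((H:ℤ)+1) (Or.inr (by omega))]
    simp
  have h3 : ∑ a ∈ Finset.Icc (0:ℤ) (H:ℤ), Lf a p * (G H n (a+1) : ℤ)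
      = ∑ x ∈ Finset.Icc (-1:ℤ) (H:ℤ), Lf x p * (G H n (x+1) : ℤ) := by
    apply Finset.sum_subset (Finset.Icc_subset_Icc_left (by omega))
    intro x hx hnx
    have hxm : x = -1 := by
      simp only [Finset.mem_Icc] at hx hnx
      omega
    subst hxm
    rw [Lf_neg (by omega) hv]
    ring
  rw [h3, ← h2]
  exact h1.symm

lemma sum_shift_down (H n : ℕ) (p : ℤ × ℤ × ℤ) :
    ∑ a ∈ Finset.Icc (0:ℤ) (H:ℤ), Lf a p * (G H n (a-1) : ℤ)
      = ∑ a ∈ Finset.Icc (0:ℤ) (H:ℤ),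
          (if a = (H:ℤ) then 0 else Lf (a+1) p * (G H n a : ℤ)) := by
  have hins : Finset.Icc (0:ℤ) (H:ℤ) = insert (H:ℤ) (Finset.Icc (0:ℤ) ((H:ℤ)-1)) := by
    ext x
    simp only [Finset.mem_Icc, Finset.mem_insert]
    omega
  have hnotmem : (H:ℤ) ∉ Finset.Icc (0:ℤ) ((H:ℤ)-1) := by
    simp only [Finset.mem_Icc]
    omega
  have hrhs : ∑ a ∈ Finset.Icc (0:ℤ) (H:ℤ),
      (if a = (H:ℤ) then 0 else Lf (a+1) p * (G H n a : ℤ))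
      = ∑ a ∈ Finset.Icc (0:ℤ) ((H:ℤ)-1), Lf (a+1) p * (G H n a : ℤ) := by
    rw [hins, Finset.sum_insert hnotmem, if_pos rfl, zero_add]
    refine Finset.sum_congr rfl fun a ha => ?_
    have : ¬ a = (H:ℤ) := by
      simp only [Finset.mem_Icc] at ha
      omega
    rw [if_neg this]
  have hins0 : Finset.Icc (0:ℤ) (H:ℤ) = insert (0:ℤ) (Finset.Icc (1:ℤ) (H:ℤ)) := by
    ext x
    simp only [Finset.mem_Icc, Finset.mem_insert]
    omega
  have hnotmem0 : (0:ℤ) ∉ Finset.Icc (1:ℤ) (H:ℤ) := by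
    simp only [Finset.mem_Icc]
    omega
  have hlhs : ∑ a ∈ Finset.Icc (0:ℤ) (H:ℤ), Lf a p * (G H n (a-1) : ℤ)
      = ∑ a ∈ Finset.Icc (1:ℤ) (H:ℤ), Lf a p * (G H n (a-1) : ℤ) := by
    rw [hins0, Finset.sum_insert hnotmem0]
    rw [G_out H n ((0:ℤ)-1) (Or.inl (by omega))]
    simp
  have hmap : Finset.Icc (1:ℤ) (H:ℤ) = (Finset.Icc (0:ℤ) ((H:ℤ)-1)).map (addRightEmbedding 1) := by
    rw [Finset.map_add_right_Icc]
    norm_num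
  rw [hlhs, hmap, Finset.sum_map, hrhs]
  refine Finset.sum_congr rfl fun a _ => ?_
  simp only [addRightEmbedding_apply]
  have e1 : a + (1:ℤ) - 1 = a := by ring
  rw [e1]

/-! ### The key intertwining induction -/

lemma key (H : ℕ) (n : ℕ) : ∀ p : ℤ × ℤ × ℤ, nonneg3 p → p.1 + p.2.1 + p.2.2 = 2*(H:ℤ) →
    (F n p : ℤ) = ∑ a ∈ Finset.Icc (0:ℤ) (H:ℤ), Lf a p * (G H n a : ℤ) := by
  induction n with
  | zero =>
    intro p hp hsum
    obtain ⟨hu, hv, hw⟩ := hp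
    have hp' : nonneg3 p := ⟨hu, hv, hw⟩
    have hF : (F 0 p : ℤ) = 1 := by
      simp [F, hp']
    rw [hF]
    have hg : ∀ a ∈ Finset.Icc (0:ℤ) (H:ℤ), Lf a p * (G H 0 a : ℤ)
        = (if a = 0 then Lf a p else 0) := by
      intro a _
      simp only [G]
      rw [apply_ite ((↑) : ℕ → ℤ)]
      split_ifs <;> simp
    rw [Finset.sum_congr rfl hg, Finset.sum_ite_eq' (Finset.Icc (0:ℤ) (H:ℤ)) 0 (fun a => Lf a p)]
    rw [if_pos (by simp [Finset.mem_Icc, Int.natCast_nonneg])]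
    unfold Lf
    omega
  | succ n ih =>
    intro p hp hsum
    obtain ⟨u, v, w⟩ := p
    obtain ⟨hu, hv, hw⟩ := hp
    have hu' : (0:ℤ) ≤ u := hu
    have hv' : (0:ℤ) ≤ v := hv
    have hw' : (0:ℤ) ≤ w := hw
    have hsum' : u + v + w = 2*(H:ℤ) := hsum
    have hp' : nonneg3 (u,v,w) := ⟨hu, hv, hw⟩
    have e1 : (u,v,w) + ((1:ℤ),(0:ℤ),(-1:ℤ)) = (u+1,v,w-1) := by
      simp only [Prod.mk_add_mk, Prod.mk.injEq]
      refine ⟨trivial, by ring, by ring⟩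
    have e2 : (u,v,w) + ((-1:ℤ),(1:ℤ),(0:ℤ)) = (u-1,v+1,w) := by
      simp only [Prod.mk_add_mk, Prod.mk.injEq]
      refine ⟨by ring, trivial, by ring⟩
    have e3 : (u,v,w) + ((0:ℤ),(-1:ℤ),(1:ℤ)) = (u,v-1,w+1) := by
      simp only [Prod.mk_add_mk, Prod.mk.injEq]
      refine ⟨by ring, by ring, trivial⟩
    have hstep : (F (n+1) (u,v,w) : ℤ)
        = (F n (u+1,v,w-1) : ℤ) + (F n (u-1,v+1,w) : ℤ) + (F n (u,v-1,w+1) : ℤ) := by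
      simp only [F, if_pos hp', e1, e2, e3]
      push_cast
      ring
    have K1 : (F n (u+1,v,w-1) : ℤ)
        = ∑ a ∈ Finset.Icc (0:ℤ) (H:ℤ),
            (if 1 ≤ w then Lf a (u+1,v,w-1) else 0) * (G H n a : ℤ) := by
      by_cases hc : 1 ≤ w
      · simp only [if_pos hc]
        exact ih (u+1,v,w-1)
          ⟨show (0:ℤ) ≤ u+1 by omega, show (0:ℤ) ≤ v by omega, show (0:ℤ) ≤ w-1 by omega⟩
          (show (u+1) + v + (w-1) = 2*(H:ℤ) by omega)
      · have hcon : ¬ nonneg3 (u+1,v,w-1) := by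
          intro hcc
          have h3 : (0:ℤ) ≤ w - 1 := hcc.2.2
          omega
        rw [F_of_not hcon]
        simp [if_neg hc]
    have K2 : (F n (u-1,v+1,w) : ℤ)
        = ∑ a ∈ Finset.Icc (0:ℤ) (H:ℤ),
            (if 1 ≤ u then Lf a (u-1,v+1,w) else 0) * (G H n a : ℤ) := by
      by_cases hc : 1 ≤ u
      · simp only [if_pos hc]
        exact ih (u-1,v+1,w)
          ⟨show (0:ℤ) ≤ u-1 by omega, show (0:ℤ) ≤ v+1 by omega, show (0:ℤ) ≤ w by omega⟩
          (show (u-1) + (v+1) + w = 2*(H:ℤ) by omega)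
      · have hcon : ¬ nonneg3 (u-1,v+1,w) := by
          intro hcc
          have h3 : (0:ℤ) ≤ u - 1 := hcc.1
          omega
        rw [F_of_not hcon]
        simp [if_neg hc]
    have K3 : (F n (u,v-1,w+1) : ℤ)
        = ∑ a ∈ Finset.Icc (0:ℤ) (H:ℤ),
            (if 1 ≤ v then Lf a (u,v-1,w+1) else 0) * (G H n a : ℤ) := by
      by_cases hc : 1 ≤ v
      · simp only [if_pos hc]
        exact ih (u,v-1,w+1)
          ⟨show (0:ℤ) ≤ u by omega, show (0:ℤ) ≤ v-1 by omega, show (0:ℤ) ≤ w+1 by omega⟩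
          (show u + (v-1) + (w+1) = 2*(H:ℤ) by omega)
      · have hcon : ¬ nonneg3 (u,v-1,w+1) := by
          intro hcc
          have h3 : (0:ℤ) ≤ v - 1 := hcc.2.1
          omega
        rw [F_of_not hcon]
        simp [if_neg hc]
    rw [hstep, K1, K2, K3, ← Finset.sum_add_distrib, ← Finset.sum_add_distrib]
    have hGr : ∀ a ∈ Finset.Icc (0:ℤ) (H:ℤ), Lf a (u,v,w) * (G H (n+1) a : ℤ)
        = Lf a (u,v,w) * (G H n (a-1) : ℤ) + Lf a (u,v,w) * (G H n (a+1) : ℤ)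
          + Lf a (u,v,w) * (if a = (H:ℤ) then 0 else (G H n a : ℤ)) := by
      intro a ha
      obtain ⟨ha0, haH⟩ := Finset.mem_Icc.mp ha
      simp only [G, if_pos (show (0:ℤ) ≤ a ∧ a ≤ (H:ℤ) from ⟨ha0, haH⟩)]
      push_cast
      ring
    have hmid : ∀ a ∈ Finset.Icc (0:ℤ) (H:ℤ),
        Lf a (u,v,w) * (if a = (H:ℤ) then 0 else (G H n a : ℤ))
          = (if a = (H:ℤ) then 0 else Lf a (u,v,w) * (G H n a : ℤ)) := by
      intro a _
      split_ifs <;> ring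
    have hRHS : ∑ a ∈ Finset.Icc (0:ℤ) (H:ℤ), Lf a (u,v,w) * (G H (n+1) a : ℤ)
        = ∑ a ∈ Finset.Icc (0:ℤ) (H:ℤ),
            (Lf (a-1) (u,v,w) * (G H n a : ℤ)
              + ((if a = (H:ℤ) then 0 else Lf a (u,v,w) * (G H n a : ℤ))
                + (if a = (H:ℤ) then 0 else Lf (a+1) (u,v,w) * (G H n a : ℤ)))) := by
      rw [Finset.sum_congr rfl hGr, Finset.sum_add_distrib, Finset.sum_add_distrib,
          Finset.sum_congr rfl hmid, sum_shift_down H n (u,v,w),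
          sum_shift_up H n (u,v,w) hv']
      rw [← Finset.sum_add_distrib, ← Finset.sum_add_distrib]
      refine Finset.sum_congr rfl fun a _ => ?_
      ring
    rw [hRHS]
    refine Finset.sum_congr rfl fun a ha => ?_
    obtain ⟨ha0, haH⟩ := Finset.mem_Icc.mp ha
    have hid := Lf_id H a u v w hu' hv' hw' hsum' ha0 haH
    split_ifs at hid ⊢ <;> linear_combination (G H n a : ℤ) * hid

end CornerAux

/-- Walks from the corner of a triangle of even side-length `2H` taking
steps only in Ω′ are equinumerous with Motzkin paths in a strip of height `H` having no
level step at height `H`. -/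
theorem corner_directed_walks_eq_motzkin_even (H n : ℕ) :
    ((triWalks (((2 * H : ℕ) : ℤ), 0, 0) n).filter
        (fun s => ∀ j, s j ∈ OmegaA)).card
      = Nat.card {h : Fin (n + 1) → ℤ // IsMotzkin H n h ∧ NoLevelAtTop H n h} := by
  rw [CornerAux.triWalks_filter, CornerAux.card_walksA, CornerAux.natCard_motzkin]
  have hp : nonneg3 (((2 * H : ℕ) : ℤ), 0, 0) :=
    ⟨Int.natCast_nonneg _, le_refl 0, le_refl 0⟩
  have hsum : (((2 * H : ℕ) : ℤ), (0:ℤ), (0:ℤ)).1 + (((2 * H : ℕ) : ℤ), (0:ℤ), (0:ℤ)).2.1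
      + (((2 * H : ℕ) : ℤ), (0:ℤ), (0:ℤ)).2.2 = 2*(H:ℤ) := by
    show ((2 * H : ℕ) : ℤ) + 0 + 0 = 2*(H:ℤ)
    push_cast
    ring
  have hk := CornerAux.key H n (((2 * H : ℕ) : ℤ), 0, 0) hp hsum
  have hLf : ∀ a ∈ Finset.Icc (0:ℤ) (H:ℤ),
      CornerAux.Lf a (((2 * H : ℕ) : ℤ), 0, 0) * (CornerAux.G H n a : ℤ)
        = (if a = 0 then (CornerAux.G H n a : ℤ) else 0) := by
    intro a ha
    obtain ⟨ha0, haH⟩ := Finset.mem_Icc.mp ha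
    have hL : CornerAux.Lf a (((2 * H : ℕ) : ℤ), 0, 0) = if a = 0 then 1 else 0 := by
      show max 0 (min a 0 - max 0 (a - 0) + 1 - max 0 (a - ((2 * H : ℕ) : ℤ)))
          = if a = 0 then 1 else 0
      split_ifs <;> omega
    rw [hL]
    split_ifs <;> ring
  rw [Finset.sum_congr rfl hLf,
      Finset.sum_ite_eq' (Finset.Icc (0:ℤ) (H:ℤ)) 0 (fun a => (CornerAux.G H n a : ℤ))] at hk
  rw [if_pos (by simp [Finset.mem_Icc, Int.natCast_nonneg])] at hk
  exact_mod_cast hk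
end

section
/- Fix L, n ∈ ℕ. The number of n-step walks in the triangle model starting at (L,0,0) all of whose steps lie in the sublattice Ω′ equals the number of n-step three-candidate Ballot paths with excess L. -/
open scoped Classical

/-- Number of steps among the first `i` whose value is `c` (coding U = 1, D = -1, H = 0). -/
noncomputable def prefixCount {n : ℕ} (e : Fin n → ℤ) (c : ℤ) (i : ℕ) : ℕ :=
  (Finset.univ.filter fun j : Fin n => (j : ℕ) < i ∧ e j = c).card

/-- An `n`-step three-candidate Ballot path with excess `L`, coded by the vertical
displacements of its steps (U = 1, D = -1, H = 0): in every prefix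
#U ≥ #D ≥ #H and #U − #H ≤ L. -/
def IsBallot (L n : ℕ) (e : Fin n → ℤ) : Prop :=
  (∀ j, e j = 1 ∨ e j = -1 ∨ e j = 0) ∧
    ∀ i ≤ n, prefixCount e (-1) i ≤ prefixCount e 1 i ∧
      prefixCount e 0 i ≤ prefixCount e (-1) i ∧
      prefixCount e 1 i ≤ L + prefixCount e 0 i

lemma mem_OmegaA_iff (v : ℤ × ℤ × ℤ) :
    v ∈ OmegaA ↔ v = (1,0,-1) ∨ v = (-1,1,0) ∨ v = (0,-1,1) := by
  simp [OmegaA]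

lemma pc_card {n : ℕ} (e : Fin n → ℤ) (c : ℤ) (i : ℕ) :
    ((Finset.univ.filter fun j : Fin n => (j : ℕ) < i).filter fun j => e j = c).card
      = prefixCount e c i := by
  rw [prefixCount, Finset.filter_filter]

lemma triPos_eq (L : ℕ) {n : ℕ} (s : Fin n → ℤ × ℤ × ℤ) (hs : ∀ j, s j ∈ OmegaA) (i : ℕ) :
    triPos ((L : ℤ), 0, 0) s i =
      ((L : ℤ) + (prefixCount (fun j => (s j).2.1) 0 i : ℤ)
          - (prefixCount (fun j => (s j).2.1) 1 i : ℤ),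
        (prefixCount (fun j => (s j).2.1) 1 i : ℤ)
          - (prefixCount (fun j => (s j).2.1) (-1) i : ℤ),
        (prefixCount (fun j => (s j).2.1) (-1) i : ℤ)
          - (prefixCount (fun j => (s j).2.1) 0 i : ℤ)) := by
  set e : Fin n → ℤ := fun j => (s j).2.1 with he
  set F := Finset.univ.filter (fun j : Fin n => (j : ℕ) < i) with hF
  have hsum : ∀ j ∈ F, s j =
      ((if e j = 0 then (1:ℤ) else 0) - (if e j = 1 then (1:ℤ) else 0),
       (if e j = 1 then (1:ℤ) else 0) - (if e j = -1 then (1:ℤ) else 0),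
       (if e j = -1 then (1:ℤ) else 0) - (if e j = 0 then (1:ℤ) else 0)) := by
    intro j _
    rcases (mem_OmegaA_iff _).1 (hs j) with h | h | h <;> simp [he, h]
  have hpc : ∀ c : ℤ, ∑ j ∈ F, (if e j = c then (1:ℤ) else 0) = (prefixCount e c i : ℤ) := by
    intro c
    rw [Finset.sum_boole, pc_card]
  rw [triPos, ← hF, Finset.sum_congr rfl hsum]
  have h1 := hpc 1
  have h2 := hpc (-1)
  have h3 := hpc 0
  refine Prod.ext ?_ (Prod.ext ?_ ?_) <;>
    simp only [Prod.fst_add, Prod.snd_add, Prod.fst_sum, Prod.snd_sum,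
      Finset.sum_sub_distrib, h1, h2, h3] <;> ring

lemma nonneg_iff (L : ℕ) {n : ℕ} (s : Fin n → ℤ × ℤ × ℤ) (hs : ∀ j, s j ∈ OmegaA) (i : ℕ) :
    nonneg3 (triPos ((L : ℤ), 0, 0) s i) ↔
      (prefixCount (fun j => (s j).2.1) (-1) i ≤ prefixCount (fun j => (s j).2.1) 1 i ∧
        prefixCount (fun j => (s j).2.1) 0 i ≤ prefixCount (fun j => (s j).2.1) (-1) i ∧
        prefixCount (fun j => (s j).2.1) 1 i ≤ L + prefixCount (fun j => (s j).2.1) 0 i) := by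
  rw [triPos_eq L s hs i]
  simp only [nonneg3]
  omega

/-- Walks from the corner of a triangle of side-length `L` taking steps
only in Ω′ are equinumerous with three-candidate Ballot paths with excess `L`. -/
theorem corner_directed_walks_eq_ballot (L n : ℕ) :
    ((triWalks ((L : ℤ), 0, 0) n).filter (fun s => ∀ j, s j ∈ OmegaA)).card
      = Nat.card {e : Fin n → ℤ // IsBallot L n e} := by
  classical
  set E : Finset (Fin n → ℤ) :=
    (Fintype.piFinset fun _ : Fin n => ({1, -1, 0} : Finset ℤ)).filter (IsBallot L n) with hE
  have hRHS : Nat.card {e : Fin n → ℤ // IsBallot L n e} = E.card := by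
    rw [← Nat.card_eq_finsetCard]
    refine Nat.card_congr (Equiv.subtypeEquivRight fun e => ?_)
    simp only [hE, Finset.mem_filter, Fintype.mem_piFinset, Finset.mem_insert,
      Finset.mem_singleton]
    constructor
    · intro h
      exact ⟨fun j => h.1 j, h⟩
    · intro h
      exact h.2
  rw [hRHS]
  refine Finset.card_bij (fun s _ => fun j => (s j).2.1) ?_ ?_ ?_
  · intro s hs
    simp only [Finset.mem_filter, triWalks] at hs
    obtain ⟨⟨_, hpos⟩, hA⟩ := hs
    have hball : IsBallot L n fun j => (s j).2.1 := by
      constructor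
      · intro j
        rcases (mem_OmegaA_iff _).1 (hA j) with h | h | h <;> simp [h]
      · intro i hi
        exact (nonneg_iff L s hA i).1 (hpos i hi)
    simp only [hE, Finset.mem_filter, Fintype.mem_piFinset]
    exact ⟨fun j => by rcases hball.1 j with h | h | h <;> simp [h], hball⟩
  · intro s1 h1 s2 h2 heq
    simp only [Finset.mem_filter] at h1 h2
    funext j
    have e1 := h1.2 j
    have e2 := h2.2 j
    have hj : (s1 j).2.1 = (s2 j).2.1 := congrFun heq j
    rcases (mem_OmegaA_iff _).1 e1 with h | h | h <;>
      rcases (mem_OmegaA_iff _).1 e2 with h' | h' | h' <;>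
      simp [h, h'] at hj ⊢
  · intro e heE
    simp only [hE, Finset.mem_filter, Fintype.mem_piFinset, Finset.mem_insert,
      Finset.mem_singleton] at heE
    obtain ⟨hmem, hball⟩ := heE
    set s : Fin n → ℤ × ℤ × ℤ := fun j =>
      if e j = 1 then (-1,1,0) else if e j = -1 then (0,-1,1) else (1,0,-1) with hsdef
    have hsA : ∀ j, s j ∈ OmegaA := by
      intro j
      rw [mem_OmegaA_iff]
      simp only [hsdef]
      split_ifs <;> tauto
    have hse : (fun j => (s j).2.1) = e := by
      funext j
      rcases hmem j with h | h | h <;> simp [hsdef, h]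
    refine ⟨s, ?_, hse⟩
    simp only [Finset.mem_filter, triWalks]
    refine ⟨⟨?_, ?_⟩, hsA⟩
    · rw [Fintype.mem_piFinset]
      intro j
      exact Finset.mem_union_left _ (hsA j)
    · intro i hi
      rw [nonneg_iff L s hsA i, hse]
      exact hball.2 i hi
end

section
/- Fix u, v ∈ ℕ. Let G(x,y;t) be the formal power series in t with coefficients in the polynomial ring ℚ[x,y] whose coefficient of t^n is Σ x^i·y^j, summed over all n-step walks in the line model starting at (u,v), where (i,j) denotes the endpoint of the walk. Then the following identity holds in ℚ[x,y][[t]]: (x·y·(1+p²) − p·(x²+y²))·(1−p^(2u+2v+4))·G(x,y;t) = (1+p²)·( x^(u+1)·y^(v+1)·(1−p^(2u+2v+4)) − x^(u+v+2)·p^(v+1)·(1−p^(2u+2)) − y^(u+v+2)·p^(u+1)·(1−p^(2v+2)) ). -/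
open scoped Classical

/-- The step-set of the line model. -/
def lineSteps : Finset (ℤ × ℤ) := {(1,-1), (-1,1)}

/-- Position after `i` steps of the walk with step sequence `s` starting at `start`. -/
def linePos (start : ℤ × ℤ) {n : ℕ} (s : Fin n → ℤ × ℤ) (i : ℕ) : ℤ × ℤ :=
  start + ∑ j ∈ Finset.univ.filter (fun j : Fin n => (j : ℕ) < i), s j

/-- `n`-step walks of the line model starting at `start`, encoded by their step sequences:
every step lies in `{(1,-1),(-1,1)}` and every intermediate point lies in ℕ². -/
noncomputable def lineWalks (start : ℤ × ℤ) (n : ℕ) : Finset (Fin n → ℤ × ℤ) :=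
  (Fintype.piFinset fun _ : Fin n => lineSteps).filter
    (fun s => ∀ i ≤ n, 0 ≤ (linePos start s i).1 ∧ 0 ≤ (linePos start s i).2)

/-- The full generating function of the line model: the coefficient of `t^n` is the sum of
the endpoint monomials `x^i y^j` over all `n`-step walks starting at `(u,v)`. -/
noncomputable def lineGF (u v : ℕ) : PowerSeries (MvPolynomial (Fin 2) ℚ) :=
  PowerSeries.mk fun n =>
    ∑ s ∈ lineWalks ((u : ℤ), (v : ℤ)) n,
      MvPolynomial.X 0 ^ (linePos ((u : ℤ), (v : ℤ)) s n).1.toNat *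
        MvPolynomial.X 1 ^ (linePos ((u : ℤ), (v : ℤ)) s n).2.toNat

namespace LineAux

open Finset

lemma steps_sum {z : ℤ × ℤ} (hz : z ∈ lineSteps) : z.1 + z.2 = 0 := by
  simp only [lineSteps, mem_insert, mem_singleton] at hz
  rcases hz with rfl | rfl <;> decide

lemma mem_lineWalks {start : ℤ × ℤ} {n : ℕ} {s : Fin n → ℤ × ℤ} :
    s ∈ lineWalks start n ↔ (∀ j, s j ∈ lineSteps) ∧
      ∀ i ≤ n, 0 ≤ (linePos start s i).1 ∧ 0 ≤ (linePos start s i).2 := by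
  simp [lineWalks, Fintype.mem_piFinset, Finset.mem_filter]

lemma linePos_sum (start : ℤ × ℤ) {n : ℕ} (s : Fin n → ℤ × ℤ)
    (hs : ∀ j, s j ∈ lineSteps) (i : ℕ) :
    (linePos start s i).1 + (linePos start s i).2 = start.1 + start.2 := by
  unfold linePos
  rw [Prod.fst_add, Prod.snd_add, Prod.fst_sum, Prod.snd_sum]
  have h : ∑ j ∈ Finset.univ.filter (fun j : Fin n => (j : ℕ) < i), (s j).1
      + ∑ j ∈ Finset.univ.filter (fun j : Fin n => (j : ℕ) < i), (s j).2 = 0 := by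
    rw [← Finset.sum_add_distrib]
    exact Finset.sum_eq_zero fun j _ => steps_sum (hs j)
  linarith

lemma linePos_snoc_of_le (start : ℤ × ℤ) {n : ℕ} (w : Fin n → ℤ × ℤ) (z : ℤ × ℤ)
    {k : ℕ} (hk : k ≤ n) :
    linePos start (Fin.snoc w z) k = linePos start w k := by
  unfold linePos
  congr 1
  rw [Finset.sum_filter, Finset.sum_filter, Fin.sum_univ_castSucc]
  have hn : ¬ ((Fin.last n : ℕ) < k) := by simp [Fin.last]; omega
  simp only [Fin.snoc_castSucc, Fin.coe_castSucc, hn, if_neg, if_false, add_zero]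

lemma linePos_snoc_last (start : ℤ × ℤ) {n : ℕ} (w : Fin n → ℤ × ℤ) (z : ℤ × ℤ) :
    linePos start (Fin.snoc w z) (n+1) = linePos start w n + z := by
  unfold linePos
  rw [Finset.sum_filter, Finset.sum_filter, Fin.sum_univ_castSucc]
  have h1 : ∀ j : Fin n, ((j.castSucc : Fin (n+1)) : ℕ) < n + 1 := fun j => by
    simp [Fin.coe_castSucc]
  have h2 : ∀ j : Fin n, (j : ℕ) < n := fun j => j.is_lt
  have hn : ((Fin.last n : ℕ)) < n + 1 := by simp [Fin.last]
  simp only [Fin.snoc_castSucc, h1, h2, hn, if_pos, Fin.snoc_last, add_assoc]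

noncomputable def Acnt (u v n : ℕ) (i : ℤ) : ℕ :=
  ((lineWalks ((u:ℤ),(v:ℤ)) n).filter
    (fun s => (linePos ((u:ℤ),(v:ℤ)) s n).1 = i)).card

lemma linePos_zero (start : ℤ × ℤ) {n : ℕ} (s : Fin n → ℤ × ℤ) :
    linePos start s 0 = start := by
  unfold linePos
  rw [Finset.filter_false_of_mem (fun j _ => by omega), Finset.sum_empty, add_zero]

lemma Acnt_zero (u v : ℕ) (i : ℤ) : Acnt u v 0 i = if i = (u:ℤ) then 1 else 0 := by
  classical
  have huniq : lineWalks ((u:ℤ),(v:ℤ)) 0 = {fun j : Fin 0 => j.elim0} := by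
    ext s
    simp only [mem_lineWalks, Finset.mem_singleton]
    constructor
    · intro _; funext j; exact j.elim0
    · rintro rfl
      refine ⟨fun j => j.elim0, fun i hi => ?_⟩
      interval_cases i
      rw [linePos_zero]
      constructor <;> positivity
  rw [Acnt, huniq, Finset.filter_singleton]
  have : linePos ((u:ℤ),(v:ℤ)) (fun j : Fin 0 => j.elim0) 0 = ((u:ℤ),(v:ℤ)) :=
    linePos_zero _ _
  by_cases h : i = (u:ℤ) <;> simp [this, h, eq_comm]

lemma endpoint_bounds {u v n : ℕ} {s : Fin n → ℤ × ℤ}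
    (hs : s ∈ lineWalks ((u:ℤ),(v:ℤ)) n) :
    0 ≤ (linePos ((u:ℤ),(v:ℤ)) s n).1 ∧ (linePos ((u:ℤ),(v:ℤ)) s n).1 ≤ (u:ℤ) + v
      ∧ (linePos ((u:ℤ),(v:ℤ)) s n).2 = (u:ℤ) + v - (linePos ((u:ℤ),(v:ℤ)) s n).1 := by
  rw [mem_lineWalks] at hs
  have hsum := linePos_sum ((u:ℤ),(v:ℤ)) s hs.1 n
  have hpos := hs.2 n le_rfl
  constructor
  · exact hpos.1
  constructor
  · have := hpos.2; simp at hsum; omega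
  · simp at hsum ⊢; omega

lemma Acnt_eq_zero_of_lt {u v n : ℕ} {i : ℤ} (h : i < 0 ∨ (u:ℤ) + v < i) :
    Acnt u v n i = 0 := by
  rw [Acnt, Finset.card_eq_zero, Finset.filter_eq_empty_iff]
  intro s hs
  have hb := endpoint_bounds hs
  intro he
  rw [he] at hb
  omega

lemma snoc_mem_lineWalks {u v n : ℕ} {w : Fin n → ℤ × ℤ} {z : ℤ × ℤ}
    (hw : w ∈ lineWalks ((u:ℤ),(v:ℤ)) n) (hz : z ∈ lineSteps)
    (hend : 0 ≤ (linePos ((u:ℤ),(v:ℤ)) w n + z).1 ∧ 0 ≤ (linePos ((u:ℤ),(v:ℤ)) w n + z).2) :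
    Fin.snoc w z ∈ lineWalks ((u:ℤ),(v:ℤ)) (n+1) := by
  rw [mem_lineWalks] at hw ⊢
  refine ⟨fun j => ?_, fun k hk => ?_⟩
  · exact Fin.lastCases (by simpa [Fin.snoc_last] using hz)
      (fun j => by simpa [Fin.snoc_castSucc] using hw.1 j) j
  · rcases Nat.lt_or_ge k (n+1) with hk' | hk'
    · rw [linePos_snoc_of_le _ _ _ (by omega)]
      exact hw.2 k (by omega)
    · have : k = n + 1 := by omega
      subst this
      rw [linePos_snoc_last]
      exact hend

lemma Acnt_succ (u v n : ℕ) (i : ℤ) (h0 : 0 ≤ i) (hN : i ≤ (u:ℤ) + v) :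
    Acnt u v (n+1) i = Acnt u v n (i-1) + Acnt u v n (i+1) := by
  classical
  have key : (lineWalks ((u:ℤ),(v:ℤ)) (n+1)).filter (fun s => (linePos ((u:ℤ),(v:ℤ)) s (n+1)).1 = i)
      = ((lineWalks ((u:ℤ),(v:ℤ)) n).filter (fun s => (linePos ((u:ℤ),(v:ℤ)) s n).1 = i-1)).image
          (fun w => (Fin.snoc w ((1:ℤ),(-1:ℤ)) : Fin (n+1) → ℤ × ℤ))
        ∪ ((lineWalks ((u:ℤ),(v:ℤ)) n).filter (fun s => (linePos ((u:ℤ),(v:ℤ)) s n).1 = i+1)).image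
          (fun w => (Fin.snoc w ((-1:ℤ),(1:ℤ)) : Fin (n+1) → ℤ × ℤ)) := by
    ext s
    simp only [Finset.mem_union, Finset.mem_image, Finset.mem_filter]
    constructor
    · rintro ⟨hs, hend⟩
      have hs' := hs
      rw [mem_lineWalks] at hs'
      obtain ⟨hsteps, hpos⟩ := hs'
      have hz := hsteps (Fin.last n)
      have hrepr : Fin.snoc (Fin.init s) (s (Fin.last n)) = s := Fin.snoc_init_self s
      have hw : Fin.init s ∈ lineWalks ((u:ℤ),(v:ℤ)) n := by
        rw [mem_lineWalks]
        refine ⟨fun j => by simpa [Fin.init] using hsteps j.castSucc, fun k hk => ?_⟩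
        have h := hpos k (by omega)
        rwa [← hrepr, linePos_snoc_of_le _ _ _ hk] at h
      have hlast : linePos ((u:ℤ),(v:ℤ)) s (n+1) = linePos ((u:ℤ),(v:ℤ)) (Fin.init s) n + s (Fin.last n) := by
        conv_lhs => rw [← hrepr]
        exact linePos_snoc_last _ _ _
      simp only [lineSteps, mem_insert, mem_singleton] at hz
      rcases hz with hz | hz
      · left
        refine ⟨Fin.init s, ⟨hw, ?_⟩, by rw [← hz]; exact hrepr⟩
        have : (linePos ((u:ℤ),(v:ℤ)) s (n+1)).1 = (linePos ((u:ℤ),(v:ℤ)) (Fin.init s) n).1 + 1 := by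
          rw [hlast, hz, Prod.fst_add]
        omega
      · right
        refine ⟨Fin.init s, ⟨hw, ?_⟩, by rw [← hz]; exact hrepr⟩
        have : (linePos ((u:ℤ),(v:ℤ)) s (n+1)).1 = (linePos ((u:ℤ),(v:ℤ)) (Fin.init s) n).1 - 1 := by
          rw [hlast, hz, Prod.fst_add]; ring
        omega
    · rintro (⟨w, ⟨hw, hwend⟩, rfl⟩ | ⟨w, ⟨hw, hwend⟩, rfl⟩)
      · have hb := endpoint_bounds hw
        have hmem := snoc_mem_lineWalks (z := ((1:ℤ),(-1:ℤ))) hw (by simp [lineSteps]) (by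
          rw [Prod.fst_add, Prod.snd_add]
          constructor <;> simp <;> omega)
        refine ⟨hmem, ?_⟩
        rw [linePos_snoc_last, Prod.fst_add, hwend]; ring
      · have hb := endpoint_bounds hw
        have hmem := snoc_mem_lineWalks (z := ((-1:ℤ),(1:ℤ))) hw (by simp [lineSteps]) (by
          rw [Prod.fst_add, Prod.snd_add]
          constructor <;> simp <;> omega)
        refine ⟨hmem, ?_⟩
        rw [linePos_snoc_last, Prod.fst_add, hwend]; ring
  have hinj : ∀ z : ℤ × ℤ, Function.Injective (fun w : Fin n → ℤ × ℤ => (Fin.snoc w z : Fin (n+1) → ℤ × ℤ)) := by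
    intro z w w' h
    funext j
    have := congrFun h j.castSucc
    simpa [Fin.snoc_castSucc] using this
  have hdisj : Disjoint
      (((lineWalks ((u:ℤ),(v:ℤ)) n).filter (fun s => (linePos ((u:ℤ),(v:ℤ)) s n).1 = i-1)).image
          (fun w => (Fin.snoc w ((1:ℤ),(-1:ℤ)) : Fin (n+1) → ℤ × ℤ)))
      (((lineWalks ((u:ℤ),(v:ℤ)) n).filter (fun s => (linePos ((u:ℤ),(v:ℤ)) s n).1 = i+1)).image
          (fun w => (Fin.snoc w ((-1:ℤ),(1:ℤ)) : Fin (n+1) → ℤ × ℤ))) := by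
    rw [Finset.disjoint_left]
    rintro a ha hb
    simp only [Finset.mem_image] at ha hb
    obtain ⟨w1, _, h1⟩ := ha
    obtain ⟨w2, _, h2⟩ := hb
    have := congrFun h1 (Fin.last n)
    have h2' := congrFun h2 (Fin.last n)
    rw [Fin.snoc_last] at this h2'
    rw [← h2'] at this
    exact absurd (congrArg Prod.fst this) (by norm_num)
  rw [Acnt, key, Finset.card_union_of_disjoint hdisj,
    Finset.card_image_of_injective _ (hinj _), Finset.card_image_of_injective _ (hinj _)]
  rfl

open PowerSeries in
noncomputable def Sser (p : PowerSeries ℚ) (u v i : ℕ) : PowerSeries ℚ :=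
  p ^ (max u i - min u i) * (1 - p ^ (2 * min u i + 2)) * (1 - p ^ (2 * (u + v - max u i) + 2))

open PowerSeries in
noncomputable def Tz (p : PowerSeries ℚ) (u v : ℕ) (i : ℤ) : PowerSeries ℚ :=
  if 0 ≤ i ∧ i ≤ (u:ℤ) + v then (1 + p^2) * Sser p u v i.toNat else 0

lemma Sser_left {p : PowerSeries ℚ} {u v i : ℕ} (h : i ≤ u) :
    Sser p u v i = p ^ (u - i) * (1 - p ^ (2*i+2)) * (1 - p ^ (2*v+2)) := by
  unfold Sser
  rw [min_eq_right h, max_eq_left h, Nat.add_sub_cancel_left]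

lemma Sser_left' {p : PowerSeries ℚ} {u v i d : ℕ} (h : u = i + d) :
    Sser p u v i = p ^ d * (1 - p ^ (2*i+2)) * (1 - p ^ (2*v+2)) := by
  subst h
  rw [Sser_left (by omega), Nat.add_sub_cancel_left]

lemma Sser_right {p : PowerSeries ℚ} {u v i : ℕ} (h : u ≤ i) :
    Sser p u v i = p ^ (i - u) * (1 - p ^ (2*u+2)) * (1 - p ^ (2*(u+v-i)+2)) := by
  unfold Sser
  rw [min_eq_left h, max_eq_right h]

lemma Sser_right' {p : PowerSeries ℚ} {u v i d e : ℕ} (h1 : i = u + d) (h2 : v = d + e) :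
    Sser p u v i = p ^ d * (1 - p ^ (2*u+2)) * (1 - p ^ (2*e+2)) := by
  subst h1; subst h2
  rw [Sser_right (by omega), Nat.add_sub_cancel_left,
    show u + (d + e) - (u + d) = e from by omega]

lemma srec_nat (p : PowerSeries ℚ) (u v : ℕ) (j : ℕ) (hj : j ≤ u + v) :
    (1 + p^2) * Sser p u v j
      = (if j = u then (1 - p^2) * (1 - p^(2*u+2*v+4)) else 0)
        + p * ((if j = 0 then 0 else Sser p u v (j-1))
          + (if j = u + v then 0 else Sser p u v (j+1))) := by
  rcases lt_trichotomy j u with hlt | rfl | hgt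
  · -- j < u
    rw [if_neg (show ¬(j = u) from by omega), if_neg (show ¬(j = u + v) from by omega)]
    rcases Nat.eq_zero_or_pos j with rfl | hj0
    · rw [if_pos rfl]
      obtain ⟨d, rfl⟩ : ∃ d, u = d + 1 := ⟨u - 1, by omega⟩
      rw [Sser_left' (d := d+1) (by omega), Sser_left' (d := d) (by omega)]
      ring
    · rw [if_neg (show ¬(j = 0) from by omega)]
      obtain ⟨k, rfl⟩ : ∃ k, j = k + 1 := ⟨j - 1, by omega⟩
      obtain ⟨d, rfl⟩ : ∃ d, u = k + 2 + d := ⟨u - k - 2, by omega⟩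
      rw [show k + 1 - 1 = k from by omega]
      rw [Sser_left' (d := d+1) (by omega), Sser_left' (d := d+2) (by omega),
        Sser_left' (d := d) (by omega)]
      ring
  · -- j = u
    rw [if_pos rfl]
    rcases Nat.eq_zero_or_pos j with rfl | hu
    · rw [if_pos rfl]
      rcases Nat.eq_zero_or_pos v with rfl | hv
      · rw [if_pos rfl]
        rw [Sser_left' (d := 0) (by omega)]
        ring
      · rw [if_neg (show ¬((0:ℕ) = 0 + v) from by omega)]
        obtain ⟨w, rfl⟩ : ∃ w, v = w + 1 := ⟨v - 1, by omega⟩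
        rw [Sser_left' (d := 0) (by omega), Sser_right' (d := 1) (e := w) rfl (by omega)]
        ring
    · rw [if_neg (show ¬(j = 0) from by omega)]
      obtain ⟨u', rfl⟩ : ∃ u', j = u' + 1 := ⟨j - 1, by omega⟩
      rw [show u' + 1 - 1 = u' from by omega]
      rcases Nat.eq_zero_or_pos v with rfl | hv
      · rw [if_pos (show u' + 1 = u' + 1 + 0 from by omega)]
        rw [Sser_left' (d := 0) (by omega), Sser_left' (d := 1) (by omega)]
        ring
      · rw [if_neg (show ¬(u' + 1 = u' + 1 + v) from by omega)]
        obtain ⟨w, rfl⟩ : ∃ w, v = w + 1 := ⟨v - 1, by omega⟩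
        rw [Sser_left' (d := 0) (by omega), Sser_left' (d := 1) (by omega),
          Sser_right' (d := 1) (e := w) rfl (by omega)]
        ring
  · -- u < j
    rw [if_neg (show ¬(j = u) from by omega), if_neg (show ¬(j = 0) from by omega)]
    obtain ⟨d, rfl⟩ : ∃ d, j = u + 1 + d := ⟨j - u - 1, by omega⟩
    rw [show u + 1 + d - 1 = u + d from by omega]
    rcases eq_or_lt_of_le hj with heq | hlt2
    · rw [if_pos (show u + 1 + d = u + v from by omega)]
      obtain ⟨e, rfl⟩ : ∃ e, v = d + 1 + e := ⟨v - d - 1, by omega⟩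
      have he : e = 0 := by omega
      subst he
      rw [Sser_right' (d := d+1) (e := 0) (by omega) (by omega),
        Sser_right' (d := d) (e := 1) (by omega) (by omega)]
      ring
    · rw [if_neg (show ¬(u + 1 + d = u + v) from by omega)]
      obtain ⟨e, rfl⟩ : ∃ e, v = d + 2 + e := ⟨v - d - 2, by omega⟩
      rw [Sser_right' (d := d+1) (e := e+1) (by omega) (by omega),
        Sser_right' (d := d) (e := e+2) (by omega) (by omega),
        Sser_right' (d := d+2) (e := e) (by omega) (by omega)]
      ring

lemma Tz_of_not {p : PowerSeries ℚ} {u v : ℕ} {i : ℤ} (h : ¬ (0 ≤ i ∧ i ≤ (u:ℤ) + v)) :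
    Tz p u v i = 0 := if_neg h

lemma Tz_of_mem {p : PowerSeries ℚ} {u v : ℕ} {i : ℤ} (h0 : 0 ≤ i) (hN : i ≤ (u:ℤ) + v) :
    Tz p u v i = (1 + p^2) * Sser p u v i.toNat := if_pos ⟨h0, hN⟩

lemma Trec (p : PowerSeries ℚ) (hp : p = PowerSeries.X * (1 + p^2)) (u v : ℕ)
    (i : ℤ) (h0 : 0 ≤ i) (hN : i ≤ (u:ℤ) + v) :
    Tz p u v i = (if i = (u:ℤ) then (1 - p^2) * (1 - p^(2*u+2*v+4)) else 0)
      + PowerSeries.X * (Tz p u v (i-1) + Tz p u v (i+1)) := by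
  lift i to ℕ using h0 with j
  have hj : j ≤ u + v := by exact_mod_cast hN
  have hm : Tz p u v ((j:ℤ)-1) = (1 + p^2) * (if j = 0 then 0 else Sser p u v (j-1)) := by
    rcases Nat.eq_zero_or_pos j with rfl | hj0
    · rw [if_pos rfl, Tz_of_not (by omega), mul_zero]
    · rw [if_neg (show ¬(j = 0) from by omega),
        show Tz p u v ((j:ℤ)-1) = (1 + p^2) * Sser p u v ((j:ℤ)-1).toNat from
          Tz_of_mem (by omega) (by omega)]
      rw [show ((j:ℤ)-1).toNat = j - 1 from by omega]
  have hp1 : Tz p u v ((j:ℤ)+1) = (1 + p^2) * (if j = u + v then 0 else Sser p u v (j+1)) := by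
    rcases eq_or_ne j (u+v) with rfl | hne
    · rw [if_pos rfl, Tz_of_not (by push_cast; omega), mul_zero]
    · rw [if_neg hne,
        show Tz p u v ((j:ℤ)+1) = (1 + p^2) * Sser p u v ((j:ℤ)+1).toNat from
          Tz_of_mem (by omega) (by omega)]
      rw [show ((j:ℤ)+1).toNat = j + 1 from by omega]
  rw [show Tz p u v (j:ℤ) = (1 + p^2) * Sser p u v ((j:ℤ)).toNat from
      Tz_of_mem (by omega) (by omega), Int.toNat_natCast, hm, hp1]
  simp only [Nat.cast_inj]
  have key := srec_nat p u v j hj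
  linear_combination key + ((if j = 0 then 0 else Sser p u v (j-1))
    + (if j = u + v then 0 else Sser p u v (j+1))) * hp

noncomputable def Wser (u v : ℕ) (i : ℤ) : PowerSeries ℚ :=
  PowerSeries.mk fun n => (Acnt u v n i : ℚ)

lemma Wser_of_not {u v : ℕ} {i : ℤ} (h : ¬ (0 ≤ i ∧ i ≤ (u:ℤ) + v)) :
    Wser u v i = 0 := by
  ext n
  simp only [Wser, PowerSeries.coeff_mk, map_zero]
  rw [Acnt_eq_zero_of_lt (by omega)]
  norm_num

lemma Wser_rec (u v : ℕ) (i : ℤ) (h0 : 0 ≤ i) (hN : i ≤ (u:ℤ) + v) :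
    Wser u v i = (if i = (u:ℤ) then 1 else 0)
      + PowerSeries.X * (Wser u v (i-1) + Wser u v (i+1)) := by
  ext n
  rcases n with _ | n
  · rw [PowerSeries.coeff_zero_eq_constantCoeff]
    simp only [map_add, map_mul, PowerSeries.constantCoeff_X, zero_mul, add_zero]
    rw [show PowerSeries.constantCoeff (Wser u v i) = (Acnt u v 0 i : ℚ) from by
      simp [Wser, ← PowerSeries.coeff_zero_eq_constantCoeff]]
    rw [Acnt_zero]
    split_ifs <;> simp
  · rw [show (PowerSeries.coeff (n+1)) (Wser u v i) = (Acnt u v (n+1) i : ℚ) from by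
      simp [Wser]]
    rw [Acnt_succ u v n i h0 hN]
    rw [map_add, PowerSeries.coeff_succ_X_mul, map_add]
    rw [show (PowerSeries.coeff n) (Wser u v (i-1)) = (Acnt u v n (i-1) : ℚ) from by
      simp [Wser]]
    rw [show (PowerSeries.coeff n) (Wser u v (i+1)) = (Acnt u v n (i+1) : ℚ) from by
      simp [Wser]]
    rw [show (PowerSeries.coeff (n+1)) (if i = (u:ℤ) then (1 : PowerSeries ℚ) else 0) = 0 from by
      split_ifs <;> simp [PowerSeries.coeff_one]]
    push_cast
    ring

lemma WserD_eq_Tz (p : PowerSeries ℚ) (hp : p = PowerSeries.X * (1 + p^2)) (u v : ℕ)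
    (i : ℤ) :
    Wser u v i * ((1 - p^2) * (1 - p^(2*u+2*v+4))) = Tz p u v i := by
  set D : PowerSeries ℚ := (1 - p^2) * (1 - p^(2*u+2*v+4)) with hD
  have key : ∀ n : ℕ, ∀ i : ℤ, (PowerSeries.coeff n) (Wser u v i * D)
      = (PowerSeries.coeff n) (Tz p u v i) := by
    intro n
    induction n with
    | zero =>
      intro i
      by_cases h : 0 ≤ i ∧ i ≤ (u:ℤ) + v
      · rw [Wser_rec u v i h.1 h.2, Trec p hp u v i h.1 h.2]
        rw [PowerSeries.coeff_zero_eq_constantCoeff]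
        simp only [map_add, map_mul, PowerSeries.constantCoeff_X, zero_mul, add_zero]
        split_ifs <;> simp [hD]
      · rw [Wser_of_not h, Tz_of_not h, zero_mul]
    | succ n ih =>
      intro i
      by_cases h : 0 ≤ i ∧ i ≤ (u:ℤ) + v
      · rw [Wser_rec u v i h.1 h.2, Trec p hp u v i h.1 h.2]
        rw [show ((if i = (u:ℤ) then (1 : PowerSeries ℚ) else 0)
              + PowerSeries.X * (Wser u v (i-1) + Wser u v (i+1))) * D
            = (if i = (u:ℤ) then D else 0)
              + PowerSeries.X * (Wser u v (i-1) * D + Wser u v (i+1) * D) from by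
          split_ifs <;> ring]
        rw [map_add, map_add, PowerSeries.coeff_succ_X_mul, PowerSeries.coeff_succ_X_mul,
          map_add, map_add, ih (i-1), ih (i+1)]
      · rw [Wser_of_not h, Tz_of_not h, zero_mul]
  ext n
  exact key n i

lemma per_a (p : PowerSeries ℚ) (hp : p = PowerSeries.X * (1 + p^2)) (u v : ℕ)
    (a : ℕ) (ha : a ≤ u + v + 2) :
    (1 - p^(2*u+2*v+4)) * ((1 + p^2) * Tz p u v ((a:ℤ)-1)
        - p * Tz p u v ((a:ℤ)-2) - p * Tz p u v (a:ℤ))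
      = (if a = u+1 then (1+p^2) * (1-p^(2*u+2*v+4)) * ((1-p^2)*(1-p^(2*u+2*v+4))) else 0)
        - (if a = u+v+2 then (1+p^2) * p^(v+1) * (1-p^(2*u+2)) * ((1-p^2)*(1-p^(2*u+2*v+4))) else 0)
        - (if a = 0 then (1+p^2) * p^(u+1) * (1-p^(2*v+2)) * ((1-p^2)*(1-p^(2*u+2*v+4))) else 0) := by
  rcases Nat.eq_zero_or_pos a with rfl | ha0
  · rw [if_neg (show ¬(0 = u+1) from by omega), if_neg (show ¬(0 = u+v+2) from by omega),
      if_pos rfl]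
    rw [show ((0:ℕ):ℤ) - 1 = (-1 : ℤ) from by omega,
      show ((0:ℕ):ℤ) - 2 = (-2 : ℤ) from by omega]
    rw [Tz_of_not (i := (-1:ℤ)) (by omega), Tz_of_not (i := (-2:ℤ)) (by omega)]
    rw [show Tz p u v ((0:ℕ):ℤ) = (1 + p^2) * Sser p u v (((0:ℕ):ℤ)).toNat from
      Tz_of_mem (by omega) (by omega)]
    rw [show (((0:ℕ):ℤ)).toNat = 0 from by omega]
    rw [Sser_left' (d := u) (by omega)]
    ring
  rcases eq_or_ne a (u+v+2) with rfl | hne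
  · rw [if_neg (show ¬(u+v+2 = u+1) from by omega), if_pos rfl,
      if_neg (show ¬(u+v+2 = 0) from by omega)]
    rw [Tz_of_not (i := ((u+v+2:ℕ):ℤ) - 1) (by push_cast; omega),
      Tz_of_not (i := ((u+v+2:ℕ):ℤ)) (by push_cast; omega)]
    rw [show Tz p u v (((u+v+2:ℕ):ℤ) - 2)
        = (1 + p^2) * Sser p u v ((((u+v+2:ℕ):ℤ) - 2)).toNat from
      Tz_of_mem (by push_cast; omega) (by push_cast; omega)]
    rw [show (((u+v+2:ℕ):ℤ) - 2).toNat = u + v from by push_cast; omega]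
    rw [Sser_right' (d := v) (e := 0) (by omega) (by omega)]
    ring
  · -- 1 ≤ a ≤ u+v+1
    obtain ⟨i, rfl⟩ : ∃ i, a = i + 1 := ⟨a - 1, by omega⟩
    have hi : i ≤ u + v := by omega
    rw [if_neg (show ¬(i+1 = u+v+2) from by omega), if_neg (show ¬(i+1 = 0) from by omega)]
    rw [show ((i+1:ℕ):ℤ) - 1 = (i:ℤ) from by omega,
      show ((i+1:ℕ):ℤ) - 2 = (i:ℤ) - 1 from by omega,
      show ((i+1:ℕ):ℤ) = (i:ℤ) + 1 from by omega]
    have trec := Trec p hp u v (i:ℤ) (by omega) (by exact_mod_cast hi)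
    by_cases hiu : i = u
    · subst hiu
      rw [if_pos rfl]
      rw [if_pos rfl] at trec
      linear_combination (1+p^2) * (1-p^(2*i+2*v+4)) * trec
        - (1-p^(2*i+2*v+4)) * (Tz p i v ((i:ℤ)-1) + Tz p i v ((i:ℤ)+1)) * hp
    · rw [if_neg (show ¬(i+1 = u+1) from by omega)]
      rw [if_neg (show ¬((i:ℤ) = (u:ℤ)) from by exact_mod_cast hiu)] at trec
      linear_combination (1+p^2) * (1-p^(2*u+2*v+4)) * trec
        - (1-p^(2*u+2*v+4)) * (Tz p u v ((i:ℤ)-1) + Tz p u v ((i:ℤ)+1)) * hp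

noncomputable abbrev C2 : ℚ →+* MvPolynomial (Fin 2) ℚ := MvPolynomial.C

noncomputable abbrev xS : PowerSeries (MvPolynomial (Fin 2) ℚ) :=
  PowerSeries.C (R := MvPolynomial (Fin 2) ℚ) (MvPolynomial.X 0)

noncomputable abbrev yS : PowerSeries (MvPolynomial (Fin 2) ℚ) :=
  PowerSeries.C (R := MvPolynomial (Fin 2) ℚ) (MvPolynomial.X 1)

lemma coeff_lineGF (u v n : ℕ) :
    (PowerSeries.coeff n) (lineGF u v)
      = ∑ i ∈ Finset.range (u+v+1),
          (Acnt u v n (i:ℤ) : MvPolynomial (Fin 2) ℚ)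
            * (MvPolynomial.X 0 ^ i * MvPolynomial.X 1 ^ (u+v-i)) := by
  classical
  rw [lineGF, PowerSeries.coeff_mk]
  rw [← Finset.sum_fiberwise_of_maps_to
      (g := fun s => (linePos ((u:ℤ),(v:ℤ)) s n).1.toNat) (t := Finset.range (u+v+1))
      (fun s hs => by
        have hb := endpoint_bounds hs
        simp only [Finset.mem_range]
        omega) _]
  refine Finset.sum_congr rfl fun i hi => ?_
  have hfil : (lineWalks ((u:ℤ),(v:ℤ)) n).filter
        (fun s => (linePos ((u:ℤ),(v:ℤ)) s n).1.toNat = i)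
      = (lineWalks ((u:ℤ),(v:ℤ)) n).filter
        (fun s => (linePos ((u:ℤ),(v:ℤ)) s n).1 = (i:ℤ)) := by
    apply Finset.filter_congr
    intro s hs
    have hb := endpoint_bounds hs
    constructor <;> intro h <;> omega
  rw [hfil]
  have hsum : ∑ s ∈ (lineWalks ((u:ℤ),(v:ℤ)) n).filter
        (fun s => (linePos ((u:ℤ),(v:ℤ)) s n).1 = (i:ℤ)),
      MvPolynomial.X (R := ℚ) (σ := Fin 2) 0 ^ (linePos ((u:ℤ),(v:ℤ)) s n).1.toNat
        * MvPolynomial.X 1 ^ (linePos ((u:ℤ),(v:ℤ)) s n).2.toNat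
      = ∑ _s ∈ (lineWalks ((u:ℤ),(v:ℤ)) n).filter
        (fun s => (linePos ((u:ℤ),(v:ℤ)) s n).1 = (i:ℤ)),
      MvPolynomial.X (R := ℚ) (σ := Fin 2) 0 ^ i * MvPolynomial.X 1 ^ (u+v-i) := by
    refine Finset.sum_congr rfl fun s hs => ?_
    rw [Finset.mem_filter] at hs
    have hb := endpoint_bounds hs.1
    have he := hs.2
    rw [show (linePos ((u:ℤ),(v:ℤ)) s n).1.toNat = i from by omega,
      show (linePos ((u:ℤ),(v:ℤ)) s n).2.toNat = u + v - i from by omega]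
  refine hsum.trans ?_
  rw [Finset.sum_const, nsmul_eq_mul]
  rfl

lemma lineGF_decomp (u v : ℕ) :
    lineGF u v = ∑ i ∈ Finset.range (u+v+1),
      (PowerSeries.map C2 (Wser u v (i:ℤ))) * xS^i * yS^(u+v-i) := by
  apply PowerSeries.ext
  intro n
  rw [coeff_lineGF]
  rw [map_sum]
  refine Finset.sum_congr rfl fun i hi => ?_
  rw [show (PowerSeries.map C2 (Wser u v (i:ℤ))) * xS^i * yS^(u+v-i)
      = (PowerSeries.map C2 (Wser u v (i:ℤ)))
        * PowerSeries.C (MvPolynomial.X 0 ^ i * MvPolynomial.X 1 ^ (u+v-i)) from by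
    rw [mul_assoc, map_mul, map_pow, map_pow]]
  rw [PowerSeries.coeff_mul_C, PowerSeries.coeff_map]
  rw [show (PowerSeries.coeff n) (Wser u v (i:ℤ)) = (Acnt u v n (i:ℤ) : ℚ) from by
    simp [Wser]]
  rw [show (C2 ((Acnt u v n (i:ℤ) : ℚ))) = ((Acnt u v n (i:ℤ) : MvPolynomial (Fin 2) ℚ)) from
    map_natCast C2 _]

lemma shift1 {M : Type*} [AddCommMonoid M] (g : ℕ → M) (m : ℕ)
    (h0 : g 0 = 0) (h2 : g (m+2) = 0) :
    ∑ a ∈ Finset.range (m+3), g a = ∑ i ∈ Finset.range (m+1), g (i+1) := by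
  rw [show m+3 = (m+2)+1 from rfl, Finset.sum_range_succ, h2, add_zero,
    Finset.sum_range_succ', h0, add_zero]

lemma shift2 {M : Type*} [AddCommMonoid M] (g : ℕ → M) (m : ℕ)
    (h0 : g 0 = 0) (h1 : g 1 = 0) :
    ∑ a ∈ Finset.range (m+3), g a = ∑ i ∈ Finset.range (m+1), g (i+2) := by
  rw [show m+3 = (m+2)+1 from rfl, Finset.sum_range_succ' g (m+2), h0, add_zero,
    Finset.sum_range_succ' (fun k => g (k+1)) (m+1)]
  simp [h1]

lemma shift0 {M : Type*} [AddCommMonoid M] (g : ℕ → M) (m : ℕ)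
    (h1 : g (m+1) = 0) (h2 : g (m+2) = 0) :
    ∑ a ∈ Finset.range (m+3), g a = ∑ i ∈ Finset.range (m+1), g i := by
  rw [show m+3 = (m+2)+1 from rfl, Finset.sum_range_succ, h2, add_zero,
    Finset.sum_range_succ, h1, add_zero]

lemma main_algebra (p : PowerSeries ℚ) (hp : p = PowerSeries.X * (1 + p^2)) (u v : ℕ) :
    (xS * yS * (1 + (PowerSeries.map C2 p)^2)
        - (PowerSeries.map C2 p) * (xS^2 + yS^2))
        * (1 - (PowerSeries.map C2 p)^(2*u+2*v+4))
        * (∑ i ∈ Finset.range (u+v+1),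
            PowerSeries.map C2 (Tz p u v (i:ℤ)) * xS^i * yS^(u+v-i))
      = (1 + (PowerSeries.map C2 p)^2)
          * (xS^(u+1) * yS^(v+1) * (1 - (PowerSeries.map C2 p)^(2*u+2*v+4))
            - xS^(u+v+2) * (PowerSeries.map C2 p)^(v+1) * (1 - (PowerSeries.map C2 p)^(2*u+2))
            - yS^(u+v+2) * (PowerSeries.map C2 p)^(u+1) * (1 - (PowerSeries.map C2 p)^(2*v+2)))
          * PowerSeries.map C2 ((1-p^2)*(1-p^(2*u+2*v+4))) := by
  have hT0 : ∀ k : ℤ, (k < 0 ∨ (u:ℤ)+v < k) → PowerSeries.map C2 (Tz p u v k) = 0 := by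
    intro k hk
    rw [Tz_of_not (by omega), map_zero]
  -- the three summand families
  set e1 : ℕ → PowerSeries (MvPolynomial (Fin 2) ℚ) := fun a =>
    (1 - (PowerSeries.map C2 p)^(2*u+2*v+4)) * (1 + (PowerSeries.map C2 p)^2)
      * PowerSeries.map C2 (Tz p u v ((a:ℤ)-1)) * xS^a * yS^(u+v+2-a) with he1
  set e2 : ℕ → PowerSeries (MvPolynomial (Fin 2) ℚ) := fun a =>
    (1 - (PowerSeries.map C2 p)^(2*u+2*v+4)) * (PowerSeries.map C2 p)
      * PowerSeries.map C2 (Tz p u v ((a:ℤ)-2)) * xS^a * yS^(u+v+2-a) with he2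
  set e3 : ℕ → PowerSeries (MvPolynomial (Fin 2) ℚ) := fun a =>
    (1 - (PowerSeries.map C2 p)^(2*u+2*v+4)) * (PowerSeries.map C2 p)
      * PowerSeries.map C2 (Tz p u v (a:ℤ)) * xS^a * yS^(u+v+2-a) with he3
  have claimA : (xS * yS * (1 + (PowerSeries.map C2 p)^2)
        - (PowerSeries.map C2 p) * (xS^2 + yS^2))
        * (1 - (PowerSeries.map C2 p)^(2*u+2*v+4))
        * (∑ i ∈ Finset.range (u+v+1),
            PowerSeries.map C2 (Tz p u v (i:ℤ)) * xS^i * yS^(u+v-i))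
      = ∑ a ∈ Finset.range (u+v+3), (e1 a - e2 a - e3 a) := by
    rw [Finset.mul_sum]
    rw [Finset.sum_sub_distrib, Finset.sum_sub_distrib]
    rw [shift1 e1 (u+v)
        (by simp only [he1]; rw [hT0 (((0:ℕ):ℤ)-1) (by omega)]; ring)
        (by simp only [he1]; rw [hT0 (((u+v+2:ℕ):ℤ)-1) (by push_cast; omega)]; ring),
      shift2 e2 (u+v)
        (by simp only [he2]; rw [hT0 (((0:ℕ):ℤ)-2) (by omega)]; ring)
        (by simp only [he2]; rw [hT0 (((1:ℕ):ℤ)-2) (by omega)]; ring),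
      shift0 e3 (u+v)
        (by simp only [he3]; rw [hT0 ((u+v+1:ℕ):ℤ) (by push_cast; omega)]; ring)
        (by simp only [he3]; rw [hT0 ((u+v+2:ℕ):ℤ) (by push_cast; omega)]; ring)]
    rw [← Finset.sum_sub_distrib, ← Finset.sum_sub_distrib]
    refine Finset.sum_congr rfl fun i hi => ?_
    rw [Finset.mem_range] at hi
    simp only [he1, he2, he3]
    rw [show ((i+1:ℕ):ℤ) - 1 = (i:ℤ) from by omega,
      show ((i+2:ℕ):ℤ) - 2 = (i:ℤ) from by omega,
      show u+v+2-(i+1) = (u+v-i)+1 from by omega,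
      show u+v+2-(i+2) = u+v-i from by omega,
      show u+v+2-i = (u+v-i)+2 from by omega]
    ring
  rw [claimA]
  -- claim B : termwise values
  have claimB : ∀ a ∈ Finset.range (u+v+3), e1 a - e2 a - e3 a
      = (if a = u+1 then (1 + (PowerSeries.map C2 p)^2) * xS^(u+1) * yS^(v+1)
            * (1 - (PowerSeries.map C2 p)^(2*u+2*v+4))
            * PowerSeries.map C2 ((1-p^2)*(1-p^(2*u+2*v+4))) else 0)
        - (if a = u+v+2 then (1 + (PowerSeries.map C2 p)^2) * xS^(u+v+2)
            * (PowerSeries.map C2 p)^(v+1) * (1 - (PowerSeries.map C2 p)^(2*u+2))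
            * PowerSeries.map C2 ((1-p^2)*(1-p^(2*u+2*v+4))) else 0)
        - (if a = 0 then (1 + (PowerSeries.map C2 p)^2) * yS^(u+v+2)
            * (PowerSeries.map C2 p)^(u+1) * (1 - (PowerSeries.map C2 p)^(2*v+2))
            * PowerSeries.map C2 ((1-p^2)*(1-p^(2*u+2*v+4))) else 0) := by
    intro a ha
    rw [Finset.mem_range] at ha
    have pa := congrArg (PowerSeries.map C2) (per_a p hp u v a (by omega))
    simp only [map_mul, map_sub, map_pow, map_one, map_add, apply_ite (PowerSeries.map C2),
      map_zero] at pa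
    have hexp : e1 a - e2 a - e3 a
        = ((1 - (PowerSeries.map C2 p)^(2*u+2*v+4))
            * ((1 + (PowerSeries.map C2 p)^2) * PowerSeries.map C2 (Tz p u v ((a:ℤ)-1))
              - (PowerSeries.map C2 p) * PowerSeries.map C2 (Tz p u v ((a:ℤ)-2))
              - (PowerSeries.map C2 p) * PowerSeries.map C2 (Tz p u v (a:ℤ))))
          * xS^a * yS^(u+v+2-a) := by
      simp only [he1, he2, he3]
      ring
    rw [hexp, pa]
    by_cases h1 : a = u+1
    · subst h1
      rw [if_pos rfl, if_pos rfl, if_neg (by omega), if_neg (by omega),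
        if_neg (by omega), if_neg (by omega)]
      rw [show u+v+2-(u+1) = v+1 from by omega]
      simp only [map_mul, map_sub, map_pow, map_one]
      ring
    · rw [if_neg h1, if_neg h1]
      by_cases h2 : a = u+v+2
      · subst h2
        rw [if_pos rfl, if_pos rfl, if_neg (by omega), if_neg (by omega)]
        rw [show u+v+2-(u+v+2) = 0 from by omega]
        simp only [map_mul, map_sub, map_pow, map_one]
        ring
      · rw [if_neg h2, if_neg h2]
        by_cases h3 : a = 0
        · subst h3
          rw [if_pos rfl, if_pos rfl]
          rw [show u+v+2-0 = u+v+2 from by omega]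
          simp only [map_mul, map_sub, map_pow, map_one]
          ring
        · rw [if_neg h3, if_neg h3]
          ring
  rw [Finset.sum_congr rfl claimB]
  rw [Finset.sum_sub_distrib, Finset.sum_sub_distrib]
  rw [Finset.sum_ite_eq' (Finset.range (u+v+3)) (u+1),
    if_pos (by simp only [Finset.mem_range]; omega)]
  rw [Finset.sum_ite_eq' (Finset.range (u+v+3)) (u+v+2),
    if_pos (by simp only [Finset.mem_range]; omega)]
  rw [Finset.sum_ite_eq' (Finset.range (u+v+3)) 0,
    if_pos (by simp only [Finset.mem_range]; omega)]
  simp only [map_mul, map_sub, map_pow, map_one]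
  ring

end LineAux

open LineAux in
/-- Closed form for the full generating function of the line model
(Proposition 1 of Mortimer–Prellberg, in cleared-denominator form). -/
theorem line_full_gf (u v : ℕ) (p : PowerSeries ℚ)
    (hp0 : PowerSeries.constantCoeff (R := ℚ) p = 0)
    (hp : p = PowerSeries.X * (1 + p ^ 2)) :
    let P : PowerSeries (MvPolynomial (Fin 2) ℚ) :=
      PowerSeries.map (MvPolynomial.C : ℚ →+* MvPolynomial (Fin 2) ℚ) p
    let x : PowerSeries (MvPolynomial (Fin 2) ℚ) :=
      PowerSeries.C (R := MvPolynomial (Fin 2) ℚ) (MvPolynomial.X 0)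
    let y : PowerSeries (MvPolynomial (Fin 2) ℚ) :=
      PowerSeries.C (R := MvPolynomial (Fin 2) ℚ) (MvPolynomial.X 1)
    (x * y * (1 + P ^ 2) - P * (x ^ 2 + y ^ 2)) * (1 - P ^ (2 * u + 2 * v + 4)) *
        lineGF u v
      = (1 + P ^ 2) *
          (x ^ (u + 1) * y ^ (v + 1) * (1 - P ^ (2 * u + 2 * v + 4))
            - x ^ (u + v + 2) * P ^ (v + 1) * (1 - P ^ (2 * u + 2))
            - y ^ (u + v + 2) * P ^ (u + 1) * (1 - P ^ (2 * v + 2))) := by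
  intro P x y
  have hP : P = PowerSeries.map C2 p := rfl
  have hx : x = xS := rfl
  have hy : y = yS := rfl
  rw [hP, hx, hy]
  set D : PowerSeries ℚ := (1 - p^2) * (1 - p^(2*u+2*v+4)) with hD
  have hccD : (PowerSeries.coeff 0) D = 1 := by
    rw [hD, PowerSeries.coeff_zero_eq_constantCoeff]
    rw [map_mul, map_sub, map_sub, map_one, map_pow, map_pow, hp0]
    rw [zero_pow (by omega : (2:ℕ) ≠ 0), zero_pow (by omega : 2*u+2*v+4 ≠ 0)]
    norm_num
  have hccmD : (PowerSeries.coeff 0) (PowerSeries.map C2 D) = 1 := by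
    rw [PowerSeries.coeff_map, hccD, map_one]
  have hmD : PowerSeries.map C2 D ≠ 0 := by
    intro h
    rw [h, map_zero] at hccmD
    exact one_ne_zero hccmD.symm
  refine mul_right_cancel₀ hmD ?_
  rw [lineGF_decomp u v]
  have hstep : (∑ i ∈ Finset.range (u+v+1),
        PowerSeries.map C2 (Wser u v (i:ℤ)) * xS^i * yS^(u+v-i)) * PowerSeries.map C2 D
      = ∑ i ∈ Finset.range (u+v+1),
        PowerSeries.map C2 (Tz p u v (i:ℤ)) * xS^i * yS^(u+v-i) := by
    rw [Finset.sum_mul]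
    refine Finset.sum_congr rfl fun i _ => ?_
    rw [show PowerSeries.map C2 (Wser u v (i:ℤ)) * xS^i * yS^(u+v-i) * PowerSeries.map C2 D
        = (PowerSeries.map C2 (Wser u v (i:ℤ)) * PowerSeries.map C2 D) * xS^i * yS^(u+v-i)
        from by ring]
    rw [← map_mul, hD, WserD_eq_Tz p hp u v i]
  calc (xS * yS * (1 + (PowerSeries.map C2 p) ^ 2)
          - (PowerSeries.map C2 p) * (xS ^ 2 + yS ^ 2))
        * (1 - (PowerSeries.map C2 p) ^ (2 * u + 2 * v + 4))
        * (∑ i ∈ Finset.range (u+v+1),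
            PowerSeries.map C2 (Wser u v (i:ℤ)) * xS^i * yS^(u+v-i))
        * PowerSeries.map C2 D
      = (xS * yS * (1 + (PowerSeries.map C2 p) ^ 2)
          - (PowerSeries.map C2 p) * (xS ^ 2 + yS ^ 2))
        * (1 - (PowerSeries.map C2 p) ^ (2 * u + 2 * v + 4))
        * ((∑ i ∈ Finset.range (u+v+1),
            PowerSeries.map C2 (Wser u v (i:ℤ)) * xS^i * yS^(u+v-i))
          * PowerSeries.map C2 D) := by ring
    _ = (xS * yS * (1 + (PowerSeries.map C2 p) ^ 2)
          - (PowerSeries.map C2 p) * (xS ^ 2 + yS ^ 2))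
        * (1 - (PowerSeries.map C2 p) ^ (2 * u + 2 * v + 4))
        * (∑ i ∈ Finset.range (u+v+1),
            PowerSeries.map C2 (Tz p u v (i:ℤ)) * xS^i * yS^(u+v-i)) := by rw [hstep]
    _ = (1 + (PowerSeries.map C2 p)^2)
          * (xS^(u+1) * yS^(v+1) * (1 - (PowerSeries.map C2 p)^(2*u+2*v+4))
            - xS^(u+v+2) * (PowerSeries.map C2 p)^(v+1) * (1 - (PowerSeries.map C2 p)^(2*u+2))
            - yS^(u+v+2) * (PowerSeries.map C2 p)^(u+1) * (1 - (PowerSeries.map C2 p)^(2*v+2)))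
          * PowerSeries.map C2 ((1-p^2)*(1-p^(2*u+2*v+4))) := main_algebra p hp u v
end

section
/- Fix u, v ∈ ℕ. Let G ∈ ℚ[[t]] be the formal power series whose coefficient of t^n is the number of n-step walks in the line model starting at (u,v) (with arbitrary endpoint). Then (1−p)²·(1+p^(u+v+2))·G = (1+p²)·(1−p^(u+1))·(1−p^(v+1)) in ℚ[[t]]. -/
open scoped Classical

lemma linePos_zero (start : ℤ × ℤ) {n : ℕ} (s : Fin n → ℤ × ℤ) : linePos start s 0 = start := by
  simp [linePos]
lemma linePos_succ (start : ℤ × ℤ) {n : ℕ} (s : Fin (n+1) → ℤ × ℤ) (i : ℕ) :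
    linePos start s (i+1) = linePos (start + s 0) (Fin.tail s) i := by
  unfold linePos
  rw [Finset.sum_filter, Finset.sum_filter, Fin.sum_univ_succ]
  simp [Fin.tail, Nat.succ_lt_succ_iff, add_assoc]
lemma mem_lineWalks {start : ℤ × ℤ} {n : ℕ} {s : Fin n → ℤ × ℤ} :
    s ∈ lineWalks start n ↔ (∀ j, s j ∈ lineSteps) ∧
      ∀ i ≤ n, 0 ≤ (linePos start s i).1 ∧ 0 ≤ (linePos start s i).2 := by
  simp [lineWalks, Fintype.mem_piFinset]

lemma card_filter_step {start a : ℤ × ℤ} (ha : a ∈ lineSteps)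
    (h1 : 0 ≤ start.1) (h2 : 0 ≤ start.2) (n : ℕ) :
    ((lineWalks start (n+1)).filter (fun s => s 0 = a)).card = (lineWalks (start + a) n).card := by
  apply Finset.card_bij' (fun s _ => Fin.tail s) (fun t _ => Fin.cons a t)
  case hi =>
    intro s hs
    simp only [Finset.mem_filter, mem_lineWalks] at hs
    obtain ⟨⟨hsteps, hpos⟩, h0⟩ := hs
    rw [mem_lineWalks]
    refine ⟨fun j => hsteps j.succ, fun i hi => ?_⟩
    rw [← h0, ← linePos_succ]
    exact hpos (i+1) (Nat.succ_le_succ hi)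
  case hj =>
    intro t ht
    rw [mem_lineWalks] at ht
    obtain ⟨hsteps, hpos⟩ := ht
    simp only [Finset.mem_filter, mem_lineWalks, Fin.cons_zero, and_true]
    refine ⟨fun j => ?_, fun i hi => ?_⟩
    · rcases Fin.eq_zero_or_eq_succ j with rfl | ⟨j', rfl⟩
      · simpa using ha
      · simpa using hsteps j'
    · rcases i with _ | i
      · simpa [linePos_zero] using ⟨h1, h2⟩
      · rw [linePos_succ]
        simp only [Fin.cons_zero, Fin.tail_cons]
        exact hpos i (Nat.succ_le_succ_iff.mp hi)
  case left_inv =>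
    intro s hs
    simp only [Finset.mem_filter] at hs
    rw [← hs.2]
    exact Fin.cons_self_tail s
  case right_inv =>
    intro t _
    simp [Fin.tail_cons]

lemma card_succ {start : ℤ × ℤ} (h1 : 0 ≤ start.1) (h2 : 0 ≤ start.2) (n : ℕ) :
    (lineWalks start (n+1)).card
      = (lineWalks (start + (1,-1)) n).card + (lineWalks (start + (-1,1)) n).card := by
  have hfil : (lineWalks start (n+1)).filter (fun s => ¬ s 0 = ((1:ℤ),(-1:ℤ)))
      = (lineWalks start (n+1)).filter (fun s => s 0 = ((-1:ℤ),(1:ℤ))) := by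
    apply Finset.filter_congr
    intro s hs
    rw [mem_lineWalks] at hs
    have := hs.1 0
    simp only [lineSteps, Finset.mem_insert, Finset.mem_singleton] at this
    constructor
    · intro h; tauto
    · intro h h'; rw [h'] at h; exact absurd h (by decide)
  rw [← card_filter_step (a := (1,-1)) (by simp [lineSteps]) h1 h2 n,
      ← card_filter_step (a := (-1,1)) (by simp [lineSteps]) h1 h2 n,
      ← Finset.card_filter_add_card_filter_not (p := fun s => s 0 = ((1:ℤ),(-1:ℤ))), hfil]

lemma lineWalks_eq_empty {start : ℤ × ℤ} (h : ¬ (0 ≤ start.1 ∧ 0 ≤ start.2)) (n : ℕ) :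
    lineWalks start n = ∅ := by
  ext s
  simp only [mem_lineWalks, Finset.notMem_empty, iff_false, not_and]
  intro _ h2
  exact h (by simpa [linePos_zero] using h2 0 (Nat.zero_le n))

lemma lineWalks_zero {start : ℤ × ℤ} (h1 : 0 ≤ start.1) (h2 : 0 ≤ start.2) :
    lineWalks start 0 = {fun j => Fin.elim0 j} := by
  ext s
  simp only [mem_lineWalks, Finset.mem_singleton]
  constructor
  · intro _; funext j; exact j.elim0
  · rintro rfl
    exact ⟨fun j => j.elim0, fun i hi => by
      interval_cases i; simpa [linePos_zero] using ⟨h1, h2⟩⟩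

noncomputable def lineF (m : ℕ) (k : ℤ) : PowerSeries ℚ :=
  PowerSeries.mk fun n => ((lineWalks (k, (m:ℤ) - k) n).card : ℚ)

noncomputable def lineG (p : PowerSeries ℚ) (m : ℕ) (k : ℤ) : PowerSeries ℚ :=
  (1 + p^2) * (1 - p ^ (k+1).toNat) * (1 - p ^ ((m:ℤ) - k + 1).toNat)

lemma lineF_zero (m : ℕ) (k : ℤ) (h : k < 0 ∨ (m:ℤ) < k) : lineF m k = 0 := by
  have : ¬ (0 ≤ (k, (m:ℤ)-k).1 ∧ 0 ≤ (k, (m:ℤ)-k).2) := by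
    simp only [not_and]; intro h1 h2; omega
  ext n
  simp [lineF, lineWalks_eq_empty this]

lemma lineG_zero (p : PowerSeries ℚ) (m : ℕ) (k : ℤ) (h : k < 0 ∨ (m:ℤ) < k) :
    lineG p m k = 0 := by
  rcases h with h | h
  · have : (k+1).toNat = 0 := by omega
    simp [lineG, this]
  · have : ((m:ℤ) - k + 1).toNat = 0 := by omega
    simp [lineG, this]

lemma lineF_rec (m : ℕ) (k : ℤ) (h0 : 0 ≤ k) (h1 : k ≤ (m:ℤ)) :
    lineF m k = 1 + PowerSeries.X * (lineF m (k+1) + lineF m (k-1)) := by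
  have hs1 : (0:ℤ) ≤ ((k, (m:ℤ)-k) : ℤ × ℤ).1 := h0
  have hs2 : (0:ℤ) ≤ ((k, (m:ℤ)-k) : ℤ × ℤ).2 := by simp only; omega
  have e1 : ((k, (m:ℤ)-k) : ℤ × ℤ) + (1,-1) = (k+1, (m:ℤ)-(k+1)) := by
    rw [Prod.mk_add_mk]; congr 1 <;> ring
  have e2 : ((k, (m:ℤ)-k) : ℤ × ℤ) + (-1,1) = (k-1, (m:ℤ)-(k-1)) := by
    rw [Prod.mk_add_mk]; congr 1 <;> ring
  ext n
  rcases n with _ | n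
  · rw [lineF]
    simp only [PowerSeries.coeff_mk, map_add, PowerSeries.coeff_zero_X_mul,
      PowerSeries.coeff_one, if_pos rfl, add_zero]
    rw [lineWalks_zero hs1 hs2]
    simp
  · rw [lineF]
    simp only [PowerSeries.coeff_mk, map_add, PowerSeries.coeff_succ_X_mul,
      PowerSeries.coeff_one, Nat.succ_ne_zero, if_false, zero_add]
    rw [card_succ hs1 hs2 n, e1, e2]
    push_cast
    simp [lineF]

lemma lineG_rec (p : PowerSeries ℚ) (hp : p = PowerSeries.X * (1 + p ^ 2)) (m : ℕ) (k : ℤ)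
    (h0 : 0 ≤ k) (h1 : k ≤ (m:ℤ)) :
    lineG p m k = (1-p)^2 * (1 + p^(m+2))
      + PowerSeries.X * (lineG p m (k+1) + lineG p m (k-1)) := by
  obtain ⟨a, rfl⟩ := Int.eq_ofNat_of_zero_le h0
  have ha : a ≤ m := by exact_mod_cast h1
  obtain ⟨b, rfl⟩ := Nat.exists_eq_add_of_le ha
  have E1 : ((a:ℤ) + 1).toNat = a + 1 := by omega
  have E2 : (((a+b:ℕ):ℤ) - (a:ℤ) + 1).toNat = b + 1 := by omega
  have E3 : ((a:ℤ) + 1 + 1).toNat = a + 2 := by omega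
  have E4 : (((a+b:ℕ):ℤ) - ((a:ℤ)+1) + 1).toNat = b := by omega
  have E5 : ((a:ℤ) - 1 + 1).toNat = a := by omega
  have E6 : (((a+b:ℕ):ℤ) - ((a:ℤ)-1) + 1).toNat = b + 2 := by omega
  simp only [lineG, E1, E2, E3, E4, E5, E6]
  linear_combination (((1:PowerSeries ℚ) - p^(a+2)) * (1 - p^b)
    + (1 - p^a) * (1 - p^(b+2))) * hp

lemma line_key (p : PowerSeries ℚ) (hp : p = PowerSeries.X * (1 + p ^ 2)) (m : ℕ) (k : ℤ) :
    (1-p)^2 * (1 + p^(m+2)) * lineF m k = lineG p m k := by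
  rw [← sub_eq_zero]
  ext n
  rw [map_zero]
  induction n using Nat.strong_induction_on generalizing k with
  | _ n ih =>
    by_cases hk : 0 ≤ k ∧ k ≤ (m:ℤ)
    · have hΔ : (1-p)^2 * (1 + p^(m+2)) * lineF m k - lineG p m k
          = PowerSeries.X * (((1-p)^2 * (1 + p^(m+2)) * lineF m (k+1) - lineG p m (k+1))
            + ((1-p)^2 * (1 + p^(m+2)) * lineF m (k-1) - lineG p m (k-1))) := by
        rw [lineF_rec m k hk.1 hk.2, lineG_rec p hp m k hk.1 hk.2]
        ring
      rw [hΔ]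
      rcases n with _ | n
      · exact PowerSeries.coeff_zero_X_mul _
      · rw [PowerSeries.coeff_succ_X_mul, map_add, ih n (Nat.lt_succ_self n) (k+1),
          ih n (Nat.lt_succ_self n) (k-1), add_zero]
    · have h' : k < 0 ∨ (m:ℤ) < k := by omega
      rw [lineF_zero m k h', lineG_zero p m k h']
      simp

/-- The generating function counting line-model walks starting at
`(u,v)` with arbitrary endpoint. -/
theorem line_gf (u v : ℕ) (p : PowerSeries ℚ)
    (hp0 : PowerSeries.constantCoeff p = 0)
    (hp : p = PowerSeries.X * (1 + p ^ 2)) :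
    (1 - p) ^ 2 * (1 + p ^ (u + v + 2)) *
        (PowerSeries.mk fun n => ((lineWalks ((u : ℤ), (v : ℤ)) n).card : ℚ))
      = (1 + p ^ 2) * (1 - p ^ (u + 1)) * (1 - p ^ (v + 1)) := by
  have hmk : (PowerSeries.mk fun n => ((lineWalks ((u : ℤ), (v : ℤ)) n).card : ℚ))
      = lineF (u+v) (u:ℤ) := by
    have : ((u:ℤ), (v:ℤ)) = (((u:ℤ), ((u+v:ℕ):ℤ) - (u:ℤ)) : ℤ × ℤ) := by
      congr 1; push_cast; ring
    rw [lineF, this]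
  have hG : lineG p (u+v) (u:ℤ) = (1 + p ^ 2) * (1 - p ^ (u + 1)) * (1 - p ^ (v + 1)) := by
    have E1 : ((u:ℤ) + 1).toNat = u + 1 := by omega
    have E2 : (((u+v:ℕ):ℤ) - (u:ℤ) + 1).toNat = v + 1 := by omega
    rw [lineG, E1, E2]
  rw [hmk, line_key p hp (u+v) (u:ℤ), hG]
end
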